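/- arXiv:1406.3813 — 7 statements merged into one kernel-verified Lean document; each statement's English description precedes it below -/
import Mathlib

section
/- Every direct summand of a CS-Rickart module is a CS-Rickart module, and every direct summand of a d-CS-Rickart module is a d-CS-Rickart module. -/
namespace CSRickartPaper

section Defs

variable {R : Type*} [Ring R] {M : Type*} [AddCommGroup M] [Module R M]

/-- `N` is an essential submodule of `P` (inside the ambient module `M`):
`N ≤ P` and every submodule of `P` intersecting `N` trivially is zero. -/
def EssentialIn (N P : Submodule R M) : Prop :=
  N ≤ P ∧ ∀ K : Submodule R M, K ≤ P → N ⊓ K = ⊥ → K = ⊥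

/-- `N` is a small (superfluous) submodule of `P`. -/
def SmallIn (N P : Submodule R M) : Prop :=
  N ≤ P ∧ ∀ K : Submodule R M, K ≤ P → N ⊔ K = P → K = P

/-- `N` is a direct summand of `M`. -/
def IsDirectSummand (N : Submodule R M) : Prop :=
  ∃ K : Submodule R M, IsCompl N K

/-- `N` lies above the direct summand `D` of `M`: `M = D ⊕ K`, `D ≤ N` and
`N ⊓ K` is small in `K`. -/
def LiesAbove (N D : Submodule R M) : Prop :=
  ∃ K : Submodule R M, IsCompl D K ∧ D ≤ N ∧ SmallIn (N ⊓ K) K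

/-- `N` lies above a direct summand of `M`. -/
def LiesAboveSummand (N : Submodule R M) : Prop :=
  ∃ D : Submodule R M, LiesAbove N D

end Defs

section ModuleDefs

variable (R : Type*) [Ring R] (M : Type*) [AddCommGroup M] [Module R M]

/-- `M` is a CS-Rickart module: the kernel of every endomorphism is essential
in a direct summand `eM`, `e` an idempotent endomorphism. -/
def IsCSRickart : Prop :=
  ∀ φ : Module.End R M, ∃ e : Module.End R M, IsIdempotentElem e ∧
    EssentialIn (LinearMap.ker φ) (LinearMap.range e)

/-- `M` is a d-CS-Rickart module: the image of every endomorphism lies above a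
direct summand of `M`. -/
def IsDCSRickart : Prop :=
  ∀ φ : Module.End R M, LiesAboveSummand (LinearMap.range φ)

/-- `M` is a Rickart module. -/
def IsRickart : Prop :=
  ∀ φ : Module.End R M, ∃ e : Module.End R M, IsIdempotentElem e ∧
    LinearMap.ker φ = LinearMap.range e

/-- `M` is a dual Rickart module. -/
def IsDRickart : Prop :=
  ∀ φ : Module.End R M, ∃ e : Module.End R M, IsIdempotentElem e ∧
    LinearMap.range φ = LinearMap.range e

/-- `M` is a CS (extending) module. -/
def IsCSModule : Prop :=
  ∀ N : Submodule R M, ∃ D : Submodule R M, IsDirectSummand D ∧ EssentialIn N D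

/-- `M` is a lifting (d-CS) module. -/
def IsLifting : Prop :=
  ∀ N : Submodule R M, LiesAboveSummand N

/-- `M` is a singular module: the annihilator of every element is an essential
ideal of `R`. -/
def IsSingularModule : Prop :=
  ∀ m : M, EssentialIn (LinearMap.ker (LinearMap.toSpanSingleton R M m)) (⊤ : Submodule R R)

/-- `M` is uniform: every nonzero submodule is essential. -/
def IsUniformModule : Prop :=
  ∀ N : Submodule R M, N ≠ ⊥ → EssentialIn N (⊤ : Submodule R M)

/-- `M` satisfies the C₂ condition: every submodule isomorphic to a direct
summand is itself a direct summand. -/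
def IsC2 : Prop :=
  ∀ N D : Submodule R M, IsDirectSummand D → Nonempty (N ≃ₗ[R] D) → IsDirectSummand N

/-- `M` is K-nonsingular. -/
def IsKNonsingular : Prop :=
  ∀ φ : Module.End R M, ∀ N : Submodule R M, EssentialIn N (⊤ : Submodule R M) →
    N ≤ LinearMap.ker φ → φ = 0

/-- `M` is T-noncosingular. -/
def IsTNoncosingular : Prop :=
  ∀ φ : Module.End R M, φ ≠ 0 → ¬ SmallIn (LinearMap.range φ) (⊤ : Submodule R M)

/-- `M` is an SIP-CS module. -/
def IsSIPCS : Prop :=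
  ∀ A B : Submodule R M, IsDirectSummand A → IsDirectSummand B →
    ∃ D : Submodule R M, IsDirectSummand D ∧ EssentialIn (A ⊓ B) D

/-- `M` is an SSP-d-CS module. -/
def IsSSPdCS : Prop :=
  ∀ A B : Submodule R M, IsDirectSummand A → IsDirectSummand B →
    LiesAboveSummand (A ⊔ B)

end ModuleDefs

section RelDefs

variable (R : Type*) [Ring R] (M N : Type*) [AddCommGroup M] [Module R M]
  [AddCommGroup N] [Module R N]

/-- `M` is relatively CS-Rickart to `N`. -/
def IsRelCSRickart : Prop :=
  ∀ φ : M →ₗ[R] N, ∃ e : Module.End R M, IsIdempotentElem e ∧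
    EssentialIn (LinearMap.ker φ) (LinearMap.range e)

/-- `M` is relatively d-CS-Rickart to `N`. -/
def IsRelDCSRickart : Prop :=
  ∀ φ : M →ₗ[R] N, LiesAboveSummand (LinearMap.range φ)

/-- `N` is `M`-injective. -/
def IsRelInjective : Prop :=
  ∀ (A : Submodule R M) (f : A →ₗ[R] N), ∃ g : M →ₗ[R] N, ∀ a : A, g a = f a

end RelDefs

section RingDefs

variable (R : Type*) [Ring R]

/-- The annihilator of an element `a` of `R`, as an ideal (kernel of `r ↦ r • a`). -/
def annElem (a : R) : Submodule R R :=
  LinearMap.ker (LinearMap.toSpanSingleton R R a)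

/-- The annihilator of a subset `X` of `R`. -/
def annSet (X : Set R) : Submodule R R :=
  ⨅ x ∈ X, annElem R x

/-- The principal ideal generated by `e`, i.e. the image of `r ↦ r • e`. -/
def idealGen (e : R) : Submodule R R :=
  LinearMap.range (LinearMap.toSpanSingleton R R e)

/-- `R` is an ACS ring: the annihilator of every element is essential in a
direct summand `eR` of `R`. -/
def IsACSRing : Prop :=
  ∀ a : R, ∃ e : R, IsIdempotentElem e ∧ EssentialIn (annElem R a) (idealGen R e)

/-- `R` is an essentially Baer ring. -/
def IsEssentiallyBaer : Prop :=
  ∀ X : Set R, X.Nonempty → ∃ e : R, IsIdempotentElem e ∧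
    EssentialIn (annSet R X) (idealGen R e)

/-- The Jacobson radical of the ring `R`. -/
noncomputable def jacRad : Ideal R := Ideal.jacobson (⊥ : Ideal R)

/-- `R` is semiregular: `R/J(R)` is von Neumann regular and idempotents lift
modulo `J(R)` (stated elementwise). -/
def IsSemiregularRing : Prop :=
  (∀ a : R, ∃ b : R, a - a * b * a ∈ jacRad R) ∧
  (∀ a : R, a - a * a ∈ jacRad R →
    ∃ e : R, IsIdempotentElem e ∧ e - a ∈ jacRad R)

/-- `J(R)` coincides with the singular ideal `Z(R)`. -/
def JacEqSingular : Prop :=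
  ∀ a : R, a ∈ jacRad R ↔ EssentialIn (annElem R a) (⊤ : Submodule R R)

end RingDefs

section GenDefs

variable {R : Type*} [Ring R] {M : Type*} [AddCommGroup M] [Module R M]

/-- A submodule is `n`-generated if it is spanned by at most `n` elements. -/
def NGen (n : ℕ) (N : Submodule R M) : Prop :=
  ∃ f : Fin n → M, Submodule.span R (Set.range f) = N

end GenDefs

end CSRickartPaper

namespace CSRickartPaper

section Aux

variable {R : Type*} [Ring R] {M : Type*} [AddCommGroup M] [Module R M]

/-- A submodule small in `P` is small in any submodule `Q` containing `P`. -/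
lemma smallIn_of_le {S P Q : Submodule R M} (h : SmallIn S P) (hPQ : P ≤ Q) :
    SmallIn S Q := by
  obtain ⟨hSP, hsmall⟩ := h
  refine ⟨hSP.trans hPQ, fun U hUQ hsup => ?_⟩
  have hmod : (S ⊔ U) ⊓ P = S ⊔ U ⊓ P := sup_inf_assoc_of_le U hSP
  rw [hsup] at hmod
  have hPU : U ⊓ P = P := hsmall (U ⊓ P) inf_le_right
    (by rw [← hmod, inf_eq_right.mpr hPQ])
  have hPleU : P ≤ U := by rw [← hPU]; exact inf_le_left
  rw [← hsup]
  exact (sup_eq_right.mpr (hSP.trans hPleU)).symm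

/-- A submodule small in `Q` contained in a direct summand `T` of `Q` is
small in `T`. -/
lemma smallIn_summand {S T C Q : Submodule R M} (h : SmallIn S Q) (hST : S ≤ T)
    (hsup : T ⊔ C = Q) (hinf : T ⊓ C = ⊥) : SmallIn S T := by
  obtain ⟨_, hsmall⟩ := h
  refine ⟨hST, fun U hUT hUsup => ?_⟩
  have h1 : S ⊔ (U ⊔ C) = Q := by rw [← sup_assoc, hUsup, hsup]
  have hTQ : T ≤ Q := by rw [← hsup]; exact le_sup_left
  have hCQ : C ≤ Q := by rw [← hsup]; exact le_sup_right
  have h2 : U ⊔ C = Q := hsmall (U ⊔ C) (sup_le (hUT.trans hTQ) hCQ) h1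
  have h3 : (U ⊔ C) ⊓ T = U ⊔ C ⊓ T := sup_inf_assoc_of_le C hUT
  rw [h2, inf_eq_right.mpr hTQ, inf_comm, hinf, sup_bot_eq] at h3
  exact h3.symm

/-- For an idempotent endomorphism, range and kernel are complements. -/
lemma idem_range_sup_ker {e : Module.End R M} (he : IsIdempotentElem e) :
    LinearMap.range e ⊔ LinearMap.ker e = ⊤ := by
  rw [eq_top_iff]
  intro m _
  have : m = e m + (m - e m) := by abel
  rw [this]
  refine Submodule.add_mem_sup ⟨m, rfl⟩ ?_
  simp only [LinearMap.mem_ker, map_sub]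
  have := congrArg (fun f : Module.End R M => f m) he
  simpa [Module.End.mul_apply, sub_eq_zero] using this.symm

lemma idem_range_inf_ker {e : Module.End R M} (he : IsIdempotentElem e) :
    LinearMap.range e ⊓ LinearMap.ker e = ⊥ := by
  rw [eq_bot_iff]
  rintro m ⟨⟨y, rfl⟩, hk⟩
  have hm : e (e y) = 0 := hk
  have := congrArg (fun f : Module.End R M => f y) he
  simp only [Module.End.mul_apply] at this
  rw [this] at hm
  simpa using hm

end Aux

/-- Every direct summand of a CS-Rickart module is CS-Rickart, and every direct
summand of a d-CS-Rickart module is d-CS-Rickart. -/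
theorem directSummand_csRickart_dcsRickart
    {R : Type*} [Ring R] {M : Type*} [AddCommGroup M] [Module R M]
    (N : Submodule R M) (hN : IsDirectSummand N) :
    (IsCSRickart R M → IsCSRickart R N) ∧ (IsDCSRickart R M → IsDCSRickart R N) := by
  obtain ⟨K, hK⟩ := hN
  have hNK_inf : N ⊓ K = ⊥ := hK.inf_eq_bot
  have hNK_sup : N ⊔ K = ⊤ := hK.sup_eq_top
  set p : M →ₗ[R] N := Submodule.projectionOnto N K hK with hp
  have hinj : Function.Injective N.subtype := Subtype.coe_injective
  have hmapinj := Submodule.map_injective_of_injective hinj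
  constructor
  · -- CS-Rickart part
    intro hM φ
    set ψ : Module.End R M := N.subtype ∘ₗ φ ∘ₗ p with hψ
    have hψx : ∀ x : N, ψ (x : M) = (φ x : M) := by
      intro x
      simp [hψ, hp, Submodule.projectionOnto_apply_left hK x]
    obtain ⟨e, he, hkle, hess⟩ := hM ψ
    set E : Submodule R M := LinearMap.range e with hE
    -- K ≤ ker ψ ≤ E
    have hKker : K ≤ LinearMap.ker ψ := by
      intro k hk
      simp only [LinearMap.mem_ker, hψ, LinearMap.comp_apply]
      rw [hp, Submodule.projectionOnto_apply_of_mem_right hK hk]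
      simp
    have hKE : K ≤ E := hKker.trans hkle
    set D : Submodule R M := E ⊓ N with hD
    have hDN : D ≤ N := inf_le_right
    have hDE : D ≤ E := inf_le_left
    set C : Submodule R M := K ⊔ LinearMap.ker e with hC
    -- E ⊓ C = K
    have hEC : E ⊓ C = K := by
      rw [hC, inf_comm, sup_inf_assoc_of_le _ hKE, inf_comm,
        idem_range_inf_ker he, sup_bot_eq]
    -- D ⊔ C = ⊤
    have hKD : K ⊔ D = E := by
      have h := sup_inf_assoc_of_le (x := K) N (z := E) hKE
      rw [sup_comm, hNK_sup, top_inf_eq] at h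
      rw [hD, inf_comm E N]
      exact h.symm
    have hDC_sup : D ⊔ C = ⊤ := by
      rw [hC, ← sup_assoc, sup_comm D K, hKD, idem_range_sup_ker he]
    have hDC_inf : D ⊓ C = ⊥ := by
      rw [eq_bot_iff, ← hNK_inf]
      intro x hx
      exact ⟨hDN hx.1, (by rw [← hEC]; exact ⟨hDE hx.1, hx.2⟩)⟩
    -- decomposition of N
    have hND_sup : D ⊔ (C ⊓ N) = N := by
      have := sup_inf_assoc_of_le (x := D) C (z := N) hDN
      rw [hDC_sup, top_inf_eq] at this
      exact this.symm
    have hND_inf : D ⊓ (C ⊓ N) = ⊥ := by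
      rw [eq_bot_iff, ← hDC_inf]
      exact inf_le_inf_left D inf_le_left
    -- inside N
    set D' : Submodule R N := Submodule.comap N.subtype D with hD'
    set C' : Submodule R N := Submodule.comap N.subtype (C ⊓ N) with hC'
    have hmapD' : Submodule.map N.subtype D' = D := by
      rw [hD', Submodule.map_comap_subtype, inf_eq_right.mpr hDN]
    have hmapC' : Submodule.map N.subtype C' = C ⊓ N := by
      rw [hC', Submodule.map_comap_subtype, inf_eq_right.mpr inf_le_right]
    have hcompl : IsCompl D' C' := by
      constructor
      · rw [disjoint_iff]
        apply hmapinj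
        rw [Submodule.map_inf _ hinj, hmapD', hmapC', Submodule.map_bot, hND_inf]
      · rw [codisjoint_iff]
        apply hmapinj
        rw [Submodule.map_sup, hmapD', hmapC', Submodule.map_subtype_top, hND_sup]
    set f : Module.End R N :=
      D'.subtype ∘ₗ Submodule.projectionOnto D' C' hcompl with hf
    have hfmem : ∀ x : N, f x ∈ D' := fun x => (Submodule.projectionOnto D' C' hcompl x).2
    have hfid : ∀ d : D', f (d : N) = (d : N) := by
      intro d
      simp [hf, Submodule.projectionOnto_apply_left hcompl d]
    refine ⟨f, ?_, ?_, ?_⟩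
    · -- idempotent
      apply LinearMap.ext
      intro x
      exact hfid ⟨f x, hfmem x⟩
    · -- ker φ ≤ range f
      have hrange : LinearMap.range f = D' := by
        apply le_antisymm
        · rintro _ ⟨x, rfl⟩; exact hfmem x
        · intro d hd
          exact ⟨d, hfid ⟨d, hd⟩⟩
      rw [hrange]
      intro x hx
      have hψ0 : (x : M) ∈ LinearMap.ker ψ := by
        rw [LinearMap.mem_ker, hψx x]
        simpa using hx
      exact ⟨hkle hψ0, x.2⟩
    · -- essentiality
      intro T hTD' hTinf
      have hrange : LinearMap.range f = D' := by
        apply le_antisymm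
        · rintro _ ⟨x, rfl⟩; exact hfmem x
        · intro d hd
          exact ⟨d, hfid ⟨d, hd⟩⟩
      rw [hrange] at hTD'
      set T' : Submodule R M := Submodule.map N.subtype T with hT'
      have hT'E : T' ≤ E := by
        rw [hT']
        intro m hm
        obtain ⟨t, ht, rfl⟩ := hm
        exact hDE (hmapD' ▸ ⟨t, hTD' ht, rfl⟩ : (t : M) ∈ D)
      have hT'0 : LinearMap.ker ψ ⊓ T' = ⊥ := by
        rw [eq_bot_iff]
        rintro m ⟨hk, ht⟩
        obtain ⟨t, ht', rfl⟩ := ht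
        have : φ t = 0 := by
          have hk' : ψ (t : M) = 0 := hk
          have := hψx t
          rw [hk'] at this
          exact Subtype.ext this.symm
        have : t ∈ (LinearMap.ker φ ⊓ T : Submodule R N) := ⟨this, ht'⟩
        rw [hTinf] at this
        have ht0 : t = 0 := by simpa using this
        simp [ht0]
      have : T' = ⊥ := hess T' hT'E hT'0
      apply hmapinj
      rw [← hT', this, Submodule.map_bot]
  · -- d-CS-Rickart part
    intro hM φ
    set ψ : Module.End R M := N.subtype ∘ₗ φ ∘ₗ p with hψ
    have hψx : ∀ x : N, ψ (x : M) = (φ x : M) := by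
      intro x
      simp [hψ, hp, Submodule.projectionOnto_apply_left hK x]
    set X : Submodule R M := LinearMap.range ψ with hX
    have hXmap : X = Submodule.map N.subtype (LinearMap.range φ) := by
      apply le_antisymm
      · rintro _ ⟨m, rfl⟩
        exact ⟨φ (p m), ⟨p m, rfl⟩, rfl⟩
      · rintro _ ⟨_, ⟨x, rfl⟩, rfl⟩
        exact ⟨(x : M), hψx x⟩
    have hXN : X ≤ N := by rw [hXmap]; exact Submodule.map_subtype_le _ _
    obtain ⟨D, K', hcompl', hDX, hsmall⟩ := hM ψ
    have hDN : D ≤ N := hDX.trans hXN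
    have hDK'_inf : D ⊓ K' = ⊥ := hcompl'.inf_eq_bot
    have hDK'_sup : D ⊔ K' = ⊤ := hcompl'.sup_eq_top
    -- decomposition of N
    have hND_sup : D ⊔ (K' ⊓ N) = N := by
      have := sup_inf_assoc_of_le (x := D) K' (z := N) hDN
      rw [hDK'_sup, top_inf_eq] at this
      exact this.symm
    have hND_inf : D ⊓ (K' ⊓ N) = ⊥ := by
      rw [eq_bot_iff, ← hDK'_inf]
      exact inf_le_inf_left D inf_le_left
    -- K' ⊓ N is a direct summand of M with complement D ⊔ K
    have hsum_sup : (K' ⊓ N) ⊔ (D ⊔ K) = ⊤ := by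
      rw [← sup_assoc, sup_comm _ D, hND_sup, hNK_sup]
    have hNDK : N ⊓ (D ⊔ K) = D := by
      have := sup_inf_assoc_of_le (x := D) K (z := N) hDN
      rw [inf_comm K N, hNK_inf, sup_bot_eq] at this
      rw [inf_comm N (D ⊔ K)]
      exact this
    have hsum_inf : (K' ⊓ N) ⊓ (D ⊔ K) = ⊥ := by
      rw [eq_bot_iff, ← hDK'_inf]
      intro x hx
      have hxD : x ∈ D := by rw [← hNDK]; exact ⟨hx.1.2, hx.2⟩
      exact ⟨hxD, hx.1.1⟩
    -- smallness transfers
    have hsmall_top : SmallIn (X ⊓ K') ⊤ := smallIn_of_le hsmall le_top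
    have hXK'le : X ⊓ K' ≤ K' ⊓ N := le_inf inf_le_right (inf_le_left.trans hXN)
    have hsmallKN : SmallIn (X ⊓ K') (K' ⊓ N) :=
      smallIn_summand hsmall_top hXK'le hsum_sup hsum_inf
    -- inside N
    set D₀ : Submodule R N := Submodule.comap N.subtype D with hD₀
    set K₀ : Submodule R N := Submodule.comap N.subtype (K' ⊓ N) with hK₀
    have hmapD₀ : Submodule.map N.subtype D₀ = D := by
      rw [hD₀, Submodule.map_comap_subtype, inf_eq_right.mpr hDN]
    have hmapK₀ : Submodule.map N.subtype K₀ = K' ⊓ N := by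
      rw [hK₀, Submodule.map_comap_subtype, inf_eq_right.mpr inf_le_right]
    have hcompl₀ : IsCompl D₀ K₀ := by
      constructor
      · rw [disjoint_iff]
        apply hmapinj
        rw [Submodule.map_inf _ hinj, hmapD₀, hmapK₀, Submodule.map_bot, hND_inf]
      · rw [codisjoint_iff]
        apply hmapinj
        rw [Submodule.map_sup, hmapD₀, hmapK₀, Submodule.map_subtype_top, hND_sup]
    refine ⟨D₀, K₀, hcompl₀, ?_, ?_⟩
    · -- D₀ ≤ range φ
      intro x hx
      have : (x : M) ∈ X := hDX hx
      rw [hXmap] at this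
      obtain ⟨y, hy, hyx⟩ := this
      rwa [show y = x from Subtype.ext hyx] at hy
    · -- smallness
      have hmapS : Submodule.map N.subtype (LinearMap.range φ ⊓ K₀) = X ⊓ K' := by
        rw [Submodule.map_inf _ hinj, hmapK₀, ← hXmap]
        rw [inf_comm K' N, ← inf_assoc, inf_eq_left.mpr hXN]
      refine ⟨inf_le_right, fun U hUK₀ hUsup => ?_⟩
      have hmap_sup : (X ⊓ K') ⊔ Submodule.map N.subtype U = K' ⊓ N := by
        rw [← hmapS, ← Submodule.map_sup, hUsup, hmapK₀]
      have hUle : Submodule.map N.subtype U ≤ K' ⊓ N := by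
        rw [← hmapK₀]
        exact Submodule.map_mono hUK₀
      have := hsmallKN.2 (Submodule.map N.subtype U) hUle hmap_sup
      apply hmapinj
      rw [this, hmapK₀]

end CSRickartPaper
end

section
/- Let M = ⊕_{i∈I} M_i be a right R-module such that each M_i is a fully invariant submodule of M. Then: (1) for an arbitrary index set I, M is a CS-Rickart module if and only if each M_i is a CS-Rickart module; (2) if I = {1,…,n} is finite, then M is a d-CS-Rickart module if and only if each M_i is a d-CS-Rickart module. -/
namespace CSRickartPaper

section AuxLemmas

variable {R : Type*} [Ring R] {M : Type*} [AddCommGroup M] [Module R M]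

theorem EssentialIn.exists_smul {A B : Submodule R M} (h : EssentialIn A B) {x : M}
    (hx : x ∈ B) (hx0 : x ≠ 0) : ∃ r : R, r • x ∈ A ∧ r • x ≠ 0 := by
  by_contra hcon
  push_neg at hcon
  have hsp : Submodule.span R {x} ≤ B := by rwa [Submodule.span_singleton_le_iff_mem]
  have hb : A ⊓ Submodule.span R {x} = ⊥ := by
    rw [eq_bot_iff]
    rintro y ⟨hyA, hysp⟩
    obtain ⟨r, rfl⟩ := Submodule.mem_span_singleton.mp hysp
    simpa using hcon r hyA
  have hbot := h.2 _ hsp hb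
  have hxx : x ∈ Submodule.span R {x} := Submodule.mem_span_singleton_self x
  rw [hbot, Submodule.mem_bot] at hxx
  exact hx0 hxx

section Transport

variable {p : Submodule R M}

theorem map_subtype_eq_bot_iff {S : Submodule R ↥p} : S.map p.subtype = ⊥ ↔ S = ⊥ := by
  constructor
  · intro hS
    rw [eq_bot_iff]
    intro x hx
    have hm : (↑x : M) ∈ S.map p.subtype := Submodule.mem_map_of_mem hx
    rw [hS, Submodule.mem_bot] at hm
    simpa [Submodule.mem_bot] using ZeroMemClass.coe_eq_zero.mp hm
  · rintro rfl
    exact Submodule.map_bot _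

theorem map_comap_self {X : Submodule R M} (hX : X ≤ p) :
    (X.comap p.subtype).map p.subtype = X := by
  rw [Submodule.map_comap_subtype, inf_eq_right.mpr hX]

theorem essentialIn_map {S T : Submodule R ↥p} (h : EssentialIn S T) :
    EssentialIn (S.map p.subtype) (T.map p.subtype) := by
  refine ⟨Submodule.map_mono h.1, fun K hK hKS => ?_⟩
  have hKp : K ≤ p := hK.trans (Submodule.map_subtype_le p T)
  have hKeq : (K.comap p.subtype).map p.subtype = K := map_comap_self hKp
  have h1 : K.comap p.subtype ≤ T := by
    rw [← Submodule.map_le_map_iff_of_injective p.injective_subtype, hKeq]; exact hK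
  have h2 : S ⊓ K.comap p.subtype = ⊥ := by
    rw [← map_subtype_eq_bot_iff (S := S ⊓ K.comap p.subtype),
      Submodule.map_inf _ p.injective_subtype, hKeq, hKS]
  rw [← hKeq, h.2 _ h1 h2, Submodule.map_bot]

theorem essentialIn_of_map {S T : Submodule R ↥p}
    (h : EssentialIn (S.map p.subtype) (T.map p.subtype)) : EssentialIn S T := by
  refine ⟨(Submodule.map_le_map_iff_of_injective p.injective_subtype _ _).mp h.1,
    fun K hK hKS => ?_⟩
  have h1 : K.map p.subtype ≤ T.map p.subtype := Submodule.map_mono hK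
  have h2 : S.map p.subtype ⊓ K.map p.subtype = ⊥ := by
    rw [← Submodule.map_inf _ p.injective_subtype, hKS, Submodule.map_bot]
  exact map_subtype_eq_bot_iff.mp (h.2 _ h1 h2)

theorem smallIn_map {S T : Submodule R ↥p} (h : SmallIn S T) :
    SmallIn (S.map p.subtype) (T.map p.subtype) := by
  refine ⟨Submodule.map_mono h.1, fun L hL hsup => ?_⟩
  have hLp : L ≤ p := hL.trans (Submodule.map_subtype_le p T)
  have hLeq : (L.comap p.subtype).map p.subtype = L := map_comap_self hLp
  have h1 : L.comap p.subtype ≤ T := by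
    rw [← Submodule.map_le_map_iff_of_injective p.injective_subtype, hLeq]; exact hL
  have h2 : S ⊔ L.comap p.subtype = T := by
    apply Submodule.map_injective_of_injective p.injective_subtype
    rw [Submodule.map_sup, hLeq, hsup]
  rw [← hLeq, h.2 _ h1 h2]

theorem smallIn_of_map {S T : Submodule R ↥p}
    (h : SmallIn (S.map p.subtype) (T.map p.subtype)) : SmallIn S T := by
  refine ⟨(Submodule.map_le_map_iff_of_injective p.injective_subtype _ _).mp h.1,
    fun L hL hsup => ?_⟩
  have h1 : L.map p.subtype ≤ T.map p.subtype := Submodule.map_mono hL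
  have h2 : S.map p.subtype ⊔ L.map p.subtype = T.map p.subtype := by
    rw [← Submodule.map_sup, hsup]
  exact Submodule.map_injective_of_injective p.injective_subtype (h.2 _ h1 h2)

end Transport

theorem smallIn_bot (P : Submodule R M) : SmallIn ⊥ P :=
  ⟨bot_le, fun L _ hsup => by rwa [bot_sup_eq] at hsup⟩

theorem SmallIn.sup {N₁ N₂ P : Submodule R M} (h1 : SmallIn N₁ P) (h2 : SmallIn N₂ P) :
    SmallIn (N₁ ⊔ N₂) P := by
  refine ⟨sup_le h1.1 h2.1, fun L hL hsup => ?_⟩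
  rw [sup_assoc] at hsup
  exact h2.2 _ hL (h1.2 _ (sup_le h2.1 hL) hsup)

theorem SmallIn.mono_right {N P P' : Submodule R M} (h : SmallIn N P) (hPP' : P ≤ P') :
    SmallIn N P' := by
  refine ⟨h.1.trans hPP', fun L hL hsup => ?_⟩
  have hmod : N ⊔ L ⊓ P = P := by
    rw [← sup_inf_assoc_of_le _ h.1, hsup, inf_eq_right.mpr hPP']
  have hLP : L ⊓ P = P := h.2 _ inf_le_right hmod
  have hNL : N ≤ L := h.1.trans (by rw [← hLP]; exact inf_le_left)
  rw [← hsup, sup_eq_right.mpr hNL]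

theorem smallIn_finset_iSup {I : Type*} [DecidableEq I] (s : Finset I)
    (N : I → Submodule R M) (P : Submodule R M) (h : ∀ i, SmallIn (N i) P) :
    SmallIn (⨆ i ∈ s, N i) P := by
  induction s using Finset.induction_on with
  | empty => simpa using smallIn_bot P
  | insert _ _ hj ih =>
    rw [Finset.iSup_insert]
    exact (h _).sup ih

theorem smallIn_iSup_fintype {I : Type*} [Fintype I] [DecidableEq I]
    (N : I → Submodule R M) (P : Submodule R M) (h : ∀ i, SmallIn (N i) P) :
    SmallIn (⨆ i, N i) P := by
  have : (⨆ i, N i) = ⨆ i ∈ (Finset.univ : Finset I), N i := by simp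
  rw [this]
  exact smallIn_finset_iSup _ N P h

theorem essentialIn_iSup {I : Type*} [DecidableEq I] {𝕄 : I → Submodule R M}
    (hInd : iSupIndep 𝕄) {A B : I → Submodule R M}
    (hB : ∀ i, B i ≤ 𝕄 i) (hE : ∀ i, EssentialIn (A i) (B i)) :
    EssentialIn (⨆ i, A i) (⨆ i, B i) := by
  refine ⟨iSup_mono fun i => (hE i).1, fun K hK hKA => ?_⟩
  have key : ∀ s : Finset I, ∀ x : M, x ∈ ⨆ i ∈ s, B i → x ≠ 0 →
      ∃ r : R, r • x ∈ ⨆ i, A i ∧ r • x ≠ 0 := by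
    intro s
    induction s using Finset.induction_on with
    | empty => intro x hx hx0; simp at hx; exact absurd hx hx0
    | @insert j s hj ih =>
      intro x hx hx0
      rw [Finset.iSup_insert] at hx
      obtain ⟨y, hy, z, hz, rfl⟩ := Submodule.mem_sup.mp hx
      by_cases hz0 : z = 0
      · subst hz0
        rw [add_zero] at hx0 ⊢
        obtain ⟨r, hr1, hr2⟩ := (hE j).exists_smul hy hx0
        exact ⟨r, Submodule.mem_iSup_of_mem j hr1, hr2⟩
      · obtain ⟨t, ht1, ht2⟩ := ih z hz hz0
        by_cases hy0 : t • y = 0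
        · refine ⟨t, ?_, ?_⟩
          · rw [smul_add, hy0, zero_add]; exact ht1
          · rw [smul_add, hy0, zero_add]; exact ht2
        · obtain ⟨u, hu1, hu2⟩ := (hE j).exists_smul ((B j).smul_mem t hy) hy0
          have hdisj : Disjoint (𝕄 j) (⨆ i, ⨆ _ : i ≠ j, 𝕄 i) := hInd j
          have hle : (⨆ i ∈ s, B i) ≤ ⨆ i, ⨆ _ : i ≠ j, 𝕄 i :=
            iSup₂_le fun i hi => le_iSup₂_of_le i (ne_of_mem_of_not_mem hi hj) (hB i)
          refine ⟨u * t, ?_, ?_⟩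
          · rw [smul_add, mul_smul, mul_smul]
            exact Submodule.add_mem _ (Submodule.mem_iSup_of_mem j hu1)
              ((⨆ i, A i).smul_mem u ht1)
          · intro hzero
            rw [smul_add, mul_smul, mul_smul] at hzero
            have h1 : u • t • y = -(u • t • z) := eq_neg_of_add_eq_zero_left hzero
            have h2 : u • t • y ∈ 𝕄 j := hB j ((hE j).1 hu1)
            have h3 : u • t • y ∈ ⨆ i, ⨆ _ : i ≠ j, 𝕄 i := by
              rw [h1]
              exact neg_mem (hle ((⨆ i ∈ s, B i).smul_mem u ((⨆ i ∈ s, B i).smul_mem t hz)))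
            exact hu2 (hdisj.le_bot ⟨h2, h3⟩)
  rw [eq_bot_iff]
  intro x hxK
  rw [Submodule.mem_bot]
  by_contra hx0
  obtain ⟨s, hs⟩ := Submodule.mem_iSup_iff_exists_finset.mp (hK hxK)
  obtain ⟨r, hr1, hr2⟩ := key s x hs hx0
  have : r • x ∈ (⨆ i, A i) ⊓ K := ⟨hr1, K.smul_mem r hxK⟩
  rw [hKA] at this
  exact hr2 (Submodule.mem_bot _ |>.mp this)

end AuxLemmas

end CSRickartPaper
namespace CSRickartPaper

section Internal

open scoped DirectSum

variable {R : Type*} [Ring R] {M : Type*} [AddCommGroup M] [Module R M]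
variable {I : Type*} [DecidableEq I] {𝕄 : I → Submodule R M}

theorem IsIdempotentElem.fix_mem {N : Type*} [AddCommGroup N] [Module R N]
    {f : Module.End R N} (hf : IsIdempotentElem f) {y : N}
    (hy : y ∈ LinearMap.range f) : f y = y := by
  obtain ⟨w, rfl⟩ := hy
  have := DFunLike.congr_fun hf w
  rwa [Module.End.mul_apply] at this

/-- The componentwise endomorphism of the direct sum. -/
noncomputable def dsMap (f : ∀ i, Module.End R ↥(𝕄 i)) :
    (⨁ i, ↥(𝕄 i)) →ₗ[R] ⨁ i, ↥(𝕄 i) :=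
  DirectSum.toModule R I _ fun i => (DirectSum.lof R I (fun i => ↥(𝕄 i)) i).comp (f i)

theorem dsMap_lof (f : ∀ i, Module.End R ↥(𝕄 i)) (i : I) (x : ↥(𝕄 i)) :
    dsMap f (DirectSum.lof R I (fun i => ↥(𝕄 i)) i x)
      = DirectSum.lof R I (fun i => ↥(𝕄 i)) i (f i x) := by
  exact DirectSum.toModule_lof (R := R)
    (φ := fun i => (DirectSum.lof R I (fun i => ↥(𝕄 i)) i).comp (f i)) i x

theorem dsMap_apply (f : ∀ i, Module.End R ↥(𝕄 i)) (d : ⨁ i, ↥(𝕄 i)) (j : I) :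
    (dsMap f d) j = f j (d j) := by
  induction d using DirectSum.induction_on with
  | zero => simp
  | of i x =>
    rw [← DirectSum.lof_eq_of R, dsMap_lof]
    rw [DirectSum.lof_eq_of R, DirectSum.lof_eq_of R]
    by_cases hij : i = j
    · subst hij
      rw [DirectSum.of_eq_same, DirectSum.of_eq_same]
    · rw [DirectSum.of_eq_of_ne _ _ _ (Ne.symm hij), DirectSum.of_eq_of_ne _ _ _ (Ne.symm hij), map_zero]
  | add x y hx hy =>
    rw [map_add, DirectSum.add_apply, DirectSum.add_apply, map_add, hx, hy]

theorem coeLinearMap_dsMap (f : ∀ i, Module.End R ↥(𝕄 i)) (φ : Module.End R M)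
    (hcomm : ∀ (i) (v : ↥(𝕄 i)), φ ↑v = ↑(f i v)) (d : ⨁ i, ↥(𝕄 i)) :
    φ (DirectSum.coeLinearMap 𝕄 d) = DirectSum.coeLinearMap 𝕄 (dsMap f d) := by
  induction d using DirectSum.induction_on with
  | zero => simp
  | of i x =>
    rw [← DirectSum.lof_eq_of R, dsMap_lof]
    rw [DirectSum.lof_eq_of R, DirectSum.lof_eq_of R]
    rw [DirectSum.coeLinearMap_of, DirectSum.coeLinearMap_of]
    exact hcomm i x
  | add x y hx hy => simp only [map_add, hx, hy]

variable (h : DirectSum.IsInternal 𝕄)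

/-- The canonical equivalence of an internal direct sum with the module. -/
noncomputable def intEq : (⨁ i, ↥(𝕄 i)) ≃ₗ[R] M :=
  LinearEquiv.ofBijective (DirectSum.coeLinearMap 𝕄) h

theorem intEq_apply (d : ⨁ i, ↥(𝕄 i)) : intEq h d = DirectSum.coeLinearMap 𝕄 d := rfl

theorem intEq_symm_commute (f : ∀ i, Module.End R ↥(𝕄 i)) (φ : Module.End R M)
    (hcomm : ∀ (i) (v : ↥(𝕄 i)), φ ↑v = ↑(f i v)) (x : M) :
    (intEq h).symm (φ x) = dsMap f ((intEq h).symm x) := by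
  have h1 : φ x = intEq h (dsMap f ((intEq h).symm x)) := by
    conv_lhs => rw [← (intEq h).apply_symm_apply x]
    rw [intEq_apply, intEq_apply]
    exact coeLinearMap_dsMap f φ hcomm _
  rw [h1, LinearEquiv.symm_apply_apply]

theorem mem_iSup_map_iff (S : ∀ i, Submodule R ↥(𝕄 i)) (x : M) :
    x ∈ (⨆ i, (S i).map (𝕄 i).subtype) ↔ ∀ i, (intEq h).symm x i ∈ S i := by
  constructor
  · intro hx
    refine Submodule.iSup_induction (motive := fun y => ∀ i, (intEq h).symm y i ∈ S i) _ hx ?_ ?_ ?_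
    · rintro i y ⟨v, hv, rfl⟩ j
      by_cases hij : j = i
      · subst hij
        have := h.ofBijective_coeLinearMap_of_mem (x := ((𝕄 j).subtype v : M)) (i := j) v.2
        rw [show (LinearEquiv.ofBijective (DirectSum.coeLinearMap 𝕄) h) = intEq h from rfl] at this
        rw [this]
        simpa using hv
      · have := h.ofBijective_coeLinearMap_of_mem_ne (x := ((𝕄 i).subtype v : M))
          (i := i) (j := j) (fun hc => hij hc.symm) v.2
        rw [show (LinearEquiv.ofBijective (DirectSum.coeLinearMap 𝕄) h) = intEq h from rfl] at this
        rw [this]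
        exact (S j).zero_mem
    · intro i
      rw [map_zero, DirectSum.zero_apply]
      exact (S i).zero_mem
    · intro y z hy hz i
      rw [map_add, DirectSum.add_apply]
      exact (S i).add_mem (hy i) (hz i)
  · intro hall
    classical
    have hx : x = DirectSum.coeLinearMap 𝕄 ((intEq h).symm x) :=
      ((intEq h).apply_symm_apply x).symm
    rw [hx, DirectSum.coeLinearMap_eq_dfinsuppSum]
    refine Submodule.dfinsuppSum_mem _ _ _ fun i _ => ?_
    exact Submodule.mem_iSup_of_mem i (Submodule.mem_map_of_mem (hall i))

theorem iSup_map_inf (h : DirectSum.IsInternal 𝕄) (S T : ∀ i, Submodule R ↥(𝕄 i)) :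
    (⨆ i, (S i).map (𝕄 i).subtype) ⊓ (⨆ i, (T i).map (𝕄 i).subtype)
      = ⨆ i, ((S i ⊓ T i).map (𝕄 i).subtype) := by
  ext x
  rw [Submodule.mem_inf, mem_iSup_map_iff h, mem_iSup_map_iff h, mem_iSup_map_iff h]
  exact ⟨fun ⟨a, b⟩ i => ⟨a i, b i⟩, fun c => ⟨fun i => (c i).1, fun i => (c i).2⟩⟩

end Internal

end CSRickartPaper
namespace CSRickartPaper

open scoped DirectSum

section MainAux

variable {R : Type*} [Ring R] {M : Type*} [AddCommGroup M] [Module R M]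
variable {I : Type*} [DecidableEq I] {𝕄 : I → Submodule R M}

/-- Complement of one component of an internal direct sum. -/
theorem isCompl_component (h : DirectSum.IsInternal 𝕄) (i : I) :
    IsCompl (𝕄 i) (⨆ j, ⨆ _ : j ≠ i, 𝕄 j) := by
  refine ⟨h.submodule_iSupIndep i, codisjoint_iff.mpr ?_⟩
  rw [eq_top_iff, ← h.submodule_iSup_eq_top]
  refine iSup_le fun j => ?_
  by_cases hj : j = i
  · subst hj; exact le_sup_left
  · exact le_sup_of_le_right (le_iSup₂_of_le j hj le_rfl)

/-- The forward direction for CS-Rickart. -/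
theorem csRickart_component (h : DirectSum.IsInternal 𝕄)
    (fi : ∀ (φ : Module.End R M) (i : I), (𝕄 i).map φ ≤ 𝕄 i)
    (hM : IsCSRickart R M) (i : I) : IsCSRickart R (𝕄 i) := by
  intro ψ
  have hc := isCompl_component h i
  set π := (𝕄 i).projectionOnto _ hc with hπ
  set φ : Module.End R M :=
    ((𝕄 i).subtype.comp (ψ : ↥(𝕄 i) →ₗ[R] ↥(𝕄 i))).comp π with hφdef
  have hφv : ∀ v : ↥(𝕄 i), φ ↑v = ↑(ψ v) := fun v => by
    rw [hφdef, LinearMap.comp_apply, LinearMap.comp_apply, hπ,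
      Submodule.projectionOnto_apply_left hc]
    rfl
  obtain ⟨e, he, hess⟩ := hM φ
  have hres : ∀ x ∈ 𝕄 i, e x ∈ 𝕄 i := fun x hx => fi e i (Submodule.mem_map_of_mem hx)
  have hfix : ∀ v : ↥(𝕄 i), (v : M) ∈ LinearMap.range e → e.restrict hres v = v := by
    intro v hv
    apply Subtype.ext
    rw [LinearMap.restrict_coe_apply]
    exact IsIdempotentElem.fix_mem he hv
  refine ⟨e.restrict hres, ?_, ?_, ?_⟩
  · apply LinearMap.ext
    intro v
    apply Subtype.ext
    rw [Module.End.mul_apply, LinearMap.restrict_coe_apply, LinearMap.restrict_coe_apply]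
    have := DFunLike.congr_fun he ((v : M))
    rwa [Module.End.mul_apply] at this
  · -- ker ψ ≤ range (e.restrict hres)
    intro v hv
    have h1 : (v : M) ∈ LinearMap.ker φ := by
      rw [LinearMap.mem_ker, hφv v, LinearMap.mem_ker.mp hv]
      simp
    exact ⟨v, hfix v (hess.1 h1)⟩
  · -- essentiality
    intro K hK hKψ
    have hKle : K.map (𝕄 i).subtype ≤ LinearMap.range e := by
      rintro x ⟨k, hk, rfl⟩
      obtain ⟨w, hw⟩ := hK hk
      refine ⟨↑w, ?_⟩
      rw [← LinearMap.restrict_coe_apply e hres w, hw, Submodule.subtype_apply]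
    have hbot : LinearMap.ker φ ⊓ K.map (𝕄 i).subtype = ⊥ := by
      rw [eq_bot_iff]
      rintro x ⟨hker, k, hk, rfl⟩
      have hψk : ψ k = 0 := by
        have h2 := LinearMap.mem_ker.mp hker
        rw [Submodule.subtype_apply, hφv k] at h2
        exact ZeroMemClass.coe_eq_zero.mp h2
      have h3 : k ∈ LinearMap.ker ψ ⊓ K := ⟨LinearMap.mem_ker.mpr hψk, hk⟩
      rw [hKψ, Submodule.mem_bot] at h3
      rw [Submodule.mem_bot, h3]
      simp
    exact map_subtype_eq_bot_iff.mp (hess.2 _ hKle hbot)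

/-- The converse direction for CS-Rickart. -/
theorem csRickart_of_components (h : DirectSum.IsInternal 𝕄)
    (fi : ∀ (φ : Module.End R M) (i : I), (𝕄 i).map φ ≤ 𝕄 i)
    (hM : ∀ i, IsCSRickart R (𝕄 i)) : IsCSRickart R M := by
  intro φ
  have hresφ : ∀ i, ∀ x ∈ 𝕄 i, φ x ∈ 𝕄 i :=
    fun i x hx => fi φ i (Submodule.mem_map_of_mem hx)
  set φr : ∀ i, Module.End R ↥(𝕄 i) := fun i => φ.restrict (hresφ i) with hφr
  have hφcomm : ∀ (i) (v : ↥(𝕄 i)), φ ↑v = ↑(φr i v) := fun i v =>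
    (LinearMap.restrict_coe_apply φ (hresφ i) v).symm
  choose e' he'idem he'ess using fun i => hM i (φr i)
  have hecomm : ∀ (i) (v : ↥(𝕄 i)),
      ((𝕄 i).subtype.comp (e' i : ↥(𝕄 i) →ₗ[R] ↥(𝕄 i))) v = ((e' i v : M)) := fun i v => rfl
  set σ := intEq h with hσ
  set e : Module.End R M := (σ.toLinearMap.comp (dsMap e')).comp σ.symm.toLinearMap with hedef
  have heapp : ∀ x, e x = σ (dsMap e' (σ.symm x)) := fun x => rfl
  have hsymm_e : ∀ x, σ.symm (e x) = dsMap e' (σ.symm x) := fun x => by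
    rw [heapp, LinearEquiv.symm_apply_apply]
  have hsymm_φ : ∀ x, σ.symm (φ x) = dsMap φr (σ.symm x) := fun x =>
    intEq_symm_commute h φr φ hφcomm x
  have hidem : IsIdempotentElem e := by
    apply LinearMap.ext
    intro x
    rw [Module.End.mul_apply, heapp, heapp, LinearEquiv.symm_apply_apply]
    have hEE : dsMap e' (dsMap e' (σ.symm x)) = dsMap e' (σ.symm x) := by
      apply DFinsupp.ext
      intro j
      rw [dsMap_apply, dsMap_apply]
      have := DFunLike.congr_fun (he'idem j) ((σ.symm x) j)
      rwa [Module.End.mul_apply] at this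
    rw [hEE]
  have hkerA : LinearMap.ker φ ≤ ⨆ i, (LinearMap.ker (φr i)).map (𝕄 i).subtype := by
    intro x hx
    rw [mem_iSup_map_iff h]
    intro i
    rw [LinearMap.mem_ker]
    have h1 : dsMap φr (σ.symm x) = 0 := by
      rw [← hsymm_φ, LinearMap.mem_ker.mp hx, map_zero]
    have := congrArg (fun d => d i) h1
    simpa [dsMap_apply] using this
  have hAker : (⨆ i, (LinearMap.ker (φr i)).map (𝕄 i).subtype) ≤ LinearMap.ker φ := by
    refine iSup_le fun i => ?_
    rintro x ⟨v, hv, rfl⟩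
    rw [LinearMap.mem_ker, Submodule.subtype_apply, hφcomm i v, LinearMap.mem_ker.mp hv]
    simp
  have hkerRange : LinearMap.ker φ ≤ LinearMap.range e := by
    intro x hx
    have hcomp := (mem_iSup_map_iff h _ x).mp (hkerA hx)
    have hfix : dsMap e' (σ.symm x) = σ.symm x := by
      apply DFinsupp.ext
      intro j
      rw [dsMap_apply]
      exact IsIdempotentElem.fix_mem (he'idem j) ((he'ess j).1 (hcomp j))
    exact ⟨x, by rw [heapp, hfix, LinearEquiv.apply_symm_apply]⟩
  have hrangeB : LinearMap.range e ≤ ⨆ i, (LinearMap.range (e' i)).map (𝕄 i).subtype := by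
    rintro x ⟨y, rfl⟩
    rw [mem_iSup_map_iff h]
    intro i
    rw [hsymm_e, dsMap_apply]
    exact LinearMap.mem_range_self _ _
  refine ⟨e, hidem, hkerRange, fun K hK hKker => ?_⟩
  have hEss := essentialIn_iSup h.submodule_iSupIndep
    (A := fun i => (LinearMap.ker (φr i)).map (𝕄 i).subtype)
    (B := fun i => (LinearMap.range (e' i)).map (𝕄 i).subtype)
    (fun i => Submodule.map_subtype_le _ _) (fun i => essentialIn_map (he'ess i))
  refine hEss.2 K (hK.trans hrangeB) ?_
  rw [eq_bot_iff]
  refine le_trans (inf_le_inf_right K hAker) ?_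
  rw [hKker]

end MainAux

end CSRickartPaper
namespace CSRickartPaper

open scoped DirectSum

section MainAux2

variable {R : Type*} [Ring R] {M : Type*} [AddCommGroup M] [Module R M]
variable {I : Type*} [DecidableEq I] {𝕄 : I → Submodule R M}

/-- The forward direction for d-CS-Rickart. -/
theorem dcsRickart_component (h : DirectSum.IsInternal 𝕄)
    (fi : ∀ (φ : Module.End R M) (i : I), (𝕄 i).map φ ≤ 𝕄 i)
    (hM : IsDCSRickart R M) (i : I) : IsDCSRickart R (𝕄 i) := by
  intro ψ
  have hc := isCompl_component h i
  have hInd := h.submodule_iSupIndep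
  set π := (𝕄 i).projectionOnto _ hc with hπ
  set φ : Module.End R M := ((𝕄 i).subtype.comp (ψ : ↥(𝕄 i) →ₗ[R] ↥(𝕄 i))).comp π with hφdef
  have hφv : ∀ v : ↥(𝕄 i), φ ↑v = ↑(ψ v) := fun v => by
    rw [hφdef, LinearMap.comp_apply, LinearMap.comp_apply, hπ,
      Submodule.projectionOnto_apply_left hc]
    rfl
  obtain ⟨D, K, hDK, hDle, hsm⟩ := hM φ
  have hrange : LinearMap.range φ = (LinearMap.range ψ).map (𝕄 i).subtype := by
    apply le_antisymm
    · rintro x ⟨y, rfl⟩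
      exact ⟨ψ (π y), LinearMap.mem_range_self _ _, rfl⟩
    · rintro x ⟨v, ⟨w, rfl⟩, rfl⟩
      exact ⟨↑w, (hφv w).trans rfl⟩
  have hNp : LinearMap.range φ ≤ 𝕄 i := by
    rw [hrange]; exact Submodule.map_subtype_le _ _
  have hDp : D ≤ 𝕄 i := hDle.trans hNp
  set eD : Module.End R M := D.subtype.comp (D.projectionOnto K hDK) with heD
  have heDrange : ∀ x, eD x ∈ D := fun x => (D.projectionOnto K hDK x).2
  have heDker : ∀ x, eD x = 0 ↔ x ∈ K := by
    intro x
    rw [heD, LinearMap.comp_apply, Submodule.subtype_apply, ZeroMemClass.coe_eq_zero]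
    exact Submodule.projectionOnto_apply_eq_zero_iff hDK
  have hCK : (⨆ j, ⨆ _ : j ≠ i, 𝕄 j) ≤ K := by
    refine iSup₂_le fun j hj x hx => ?_
    apply (heDker x).mp
    have h1 : eD x ∈ 𝕄 j := fi eD j (Submodule.mem_map_of_mem hx)
    have h2 : eD x ∈ 𝕄 i := hDp (heDrange x)
    have h3 : eD x ∈ ⨆ k, ⨆ _ : k ≠ j, 𝕄 k :=
      Submodule.mem_iSup_of_mem i (Submodule.mem_iSup_of_mem (Ne.symm hj) h2)
    exact (Submodule.mem_bot _).mp ((hInd j).le_bot ⟨h1, h3⟩)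
  set Kp := K ⊓ 𝕄 i with hKp
  have hsupK : Kp ⊔ (⨆ j, ⨆ _ : j ≠ i, 𝕄 j) = K := by
    rw [hKp, inf_sup_assoc_of_le _ hCK, codisjoint_iff.mp hc.2, inf_top_eq]
  have hDKp_sup : D ⊔ Kp = 𝕄 i := by
    rw [hKp, ← sup_inf_assoc_of_le _ hDp, codisjoint_iff.mp hDK.2, top_inf_eq]
  have hDKp_inf : D ⊓ Kp = ⊥ := by
    rw [eq_bot_iff, hKp]
    exact le_trans (inf_le_inf_left D inf_le_left) (disjoint_iff.mp hDK.1).le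
  have hNKp : LinearMap.range φ ⊓ Kp = LinearMap.range φ ⊓ K := by
    rw [hKp, inf_comm K (𝕄 i), ← inf_assoc, inf_eq_left.mpr hNp]
  have hsm' : SmallIn (LinearMap.range φ ⊓ Kp) Kp := by
    refine ⟨inf_le_right, fun L hL hsup => ?_⟩
    have hLp : L ≤ 𝕄 i := hL.trans inf_le_right
    have hstep : (LinearMap.range φ ⊓ K) ⊔ (L ⊔ (⨆ j, ⨆ _ : j ≠ i, 𝕄 j)) = K := by
      rw [← sup_assoc, ← hNKp, hsup, hsupK]
    have hLC := hsm.2 _ (sup_le (hL.trans inf_le_left) hCK) hstep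
    have hCp : (⨆ j, ⨆ _ : j ≠ i, 𝕄 j) ⊓ 𝕄 i = ⊥ := by
      rw [inf_comm]
      exact disjoint_iff.mp (hInd i)
    rw [hKp, ← hLC, sup_inf_assoc_of_le _ hLp, hCp, sup_bot_eq]
  have hDmap : (D.comap (𝕄 i).subtype).map (𝕄 i).subtype = D := map_comap_self hDp
  have hKpmap : (Kp.comap (𝕄 i).subtype).map (𝕄 i).subtype = Kp := map_comap_self inf_le_right
  refine ⟨D.comap (𝕄 i).subtype, Kp.comap (𝕄 i).subtype,
    ⟨disjoint_iff.mpr ?_, codisjoint_iff.mpr ?_⟩, ?_, ?_⟩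
  · apply map_subtype_eq_bot_iff.mp
    rw [Submodule.map_inf _ (𝕄 i).injective_subtype, hDmap, hKpmap, hDKp_inf]
  · apply Submodule.map_injective_of_injective (𝕄 i).injective_subtype
    rw [Submodule.map_sup, hDmap, hKpmap, hDKp_sup, Submodule.map_subtype_top]
  · rw [← Submodule.map_le_map_iff_of_injective (𝕄 i).injective_subtype, hDmap, ← hrange]
    exact hDle
  · apply smallIn_of_map
    rw [Submodule.map_inf _ (𝕄 i).injective_subtype, hKpmap, ← hrange]
    exact hsm'

/-- The converse direction for d-CS-Rickart (finite index type). -/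
theorem dcsRickart_of_components [Fintype I] (h : DirectSum.IsInternal 𝕄)
    (fi : ∀ (φ : Module.End R M) (i : I), (𝕄 i).map φ ≤ 𝕄 i)
    (hM : ∀ i, IsDCSRickart R (𝕄 i)) : IsDCSRickart R M := by
  intro φ
  have hresφ : ∀ i, ∀ x ∈ 𝕄 i, φ x ∈ 𝕄 i :=
    fun i x hx => fi φ i (Submodule.mem_map_of_mem hx)
  set φr : ∀ i, Module.End R ↥(𝕄 i) := fun i => φ.restrict (hresφ i) with hφr
  have hφcomm : ∀ (i) (v : ↥(𝕄 i)), φ ↑v = ↑(φr i v) := fun i v =>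
    (LinearMap.restrict_coe_apply φ (hresφ i) v).symm
  set σ := intEq h with hσ
  have hsymm_φ : ∀ x, σ.symm (φ x) = dsMap φr (σ.symm x) := fun x =>
    intEq_symm_commute h φr φ hφcomm x
  have hM' : ∀ i, ∃ D K : Submodule R ↥(𝕄 i), IsCompl D K ∧ D ≤ LinearMap.range (φr i) ∧
      SmallIn (LinearMap.range (φr i) ⊓ K) K := fun i => hM i (φr i)
  choose D K hDK hDle hsm using hM'
  have hrange : LinearMap.range φ = ⨆ i, (LinearMap.range (φr i)).map (𝕄 i).subtype := by
    apply le_antisymm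
    · rintro x ⟨y, rfl⟩
      rw [mem_iSup_map_iff h]
      intro i
      rw [hsymm_φ, dsMap_apply]
      exact LinearMap.mem_range_self _ _
    · refine iSup_le fun i => ?_
      rintro x ⟨v, ⟨w, rfl⟩, rfl⟩
      exact ⟨↑w, by rw [Submodule.subtype_apply, hφcomm i w]⟩
  refine ⟨⨆ i, (D i).map (𝕄 i).subtype, ⨆ i, (K i).map (𝕄 i).subtype,
    ⟨disjoint_iff.mpr ?_, codisjoint_iff.mpr ?_⟩, ?_, ?_⟩
  · rw [iSup_map_inf h]
    have hbot : ∀ i, D i ⊓ K i = ⊥ := fun i => disjoint_iff.mp (hDK i).1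
    simp [hbot]
  · rw [← iSup_sup_eq]
    have hall : ∀ i, (D i).map (𝕄 i).subtype ⊔ (K i).map (𝕄 i).subtype = 𝕄 i := fun i => by
      rw [← Submodule.map_sup, codisjoint_iff.mp (hDK i).2, Submodule.map_subtype_top]
    rw [iSup_congr hall, h.submodule_iSup_eq_top]
  · refine iSup_le fun i => ?_
    rintro x ⟨v, hv, rfl⟩
    obtain ⟨w, hw⟩ := hDle i hv
    exact ⟨↑w, by rw [Submodule.subtype_apply, hφcomm i w, hw]⟩
  · rw [hrange, iSup_map_inf h]
    apply smallIn_iSup_fintype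
    intro i
    exact (smallIn_map (hsm i)).mono_right
      (le_iSup (fun j => (K j).map (𝕄 j).subtype) i)

end MainAux2

end CSRickartPaper
namespace CSRickartPaper

/-- For an internal direct sum of fully invariant submodules:
(1) over any index set, the sum is CS-Rickart iff each summand is;
(2) over a finite index set, the sum is d-CS-Rickart iff each summand is. -/
theorem fullyInvariant_directSum_csRickart
    {R : Type*} [Ring R] {M : Type*} [AddCommGroup M] [Module R M] :
    (∀ (I : Type*) [DecidableEq I] (𝕄 : I → Submodule R M),
        DirectSum.IsInternal 𝕄 →
        (∀ (φ : Module.End R M) (i : I), (𝕄 i).map φ ≤ 𝕄 i) →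
        (IsCSRickart R M ↔ ∀ i, IsCSRickart R (𝕄 i))) ∧
    (∀ (n : ℕ) (𝕄 : Fin n → Submodule R M),
        DirectSum.IsInternal 𝕄 →
        (∀ (φ : Module.End R M) (i : Fin n), (𝕄 i).map φ ≤ 𝕄 i) →
        (IsDCSRickart R M ↔ ∀ i, IsDCSRickart R (𝕄 i))) := by
  constructor
  · intro I _ 𝕄 h fi
    exact ⟨fun hM i => csRickart_component h fi hM i, fun hM => csRickart_of_components h fi hM⟩
  · intro n 𝕄 h fi
    exact ⟨fun hM i => dcsRickart_component h fi hM i, fun hM => dcsRickart_of_components h fi hM⟩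

end CSRickartPaper
end

section
/- Let A be a uniform hereditary right R-module (every submodule of A is projective) and let B be a singular uniform Artinian right R-module. Then: (1) A ⊕ B is a CS-Rickart module; (2) if B is not A-injective, then A ⊕ B is not a CS module. -/
namespace CSRickartPaper

section AuxLemmas

variable {R : Type*} [Ring R] {A B : Type*} [AddCommGroup A] [Module R A]
  [AddCommGroup B] [Module R B]

lemma ess_elem {M : Type*} [AddCommGroup M] [Module R M] {W : Submodule R M}
    (h : EssentialIn W (⊤ : Submodule R M)) {a : M} (ha : a ≠ 0) :
    ∃ r : R, r • a ∈ W ∧ r • a ≠ 0 := by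
  by_contra hc
  push_neg at hc
  have hbot : W ⊓ Submodule.span R {a} = ⊥ := by
    rw [eq_bot_iff]
    rintro z hz
    obtain ⟨hzW, hzK⟩ := Submodule.mem_inf.mp hz
    obtain ⟨r, rfl⟩ := Submodule.mem_span_singleton.mp hzK
    exact (Submodule.mem_bot R).mpr (hc r hzW)
  have hsp := h.2 _ le_top hbot
  have : a ∈ (⊥ : Submodule R M) := hsp ▸ Submodule.mem_span_singleton_self a
  exact ha ((Submodule.mem_bot R).mp this)

/-- Core lemma: if every (cyclic) submodule of `A` is projective, `b : B` has
essential annihilator, and `ann b ≤ ann a`, then `a = 0`. -/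

lemma core_ann (hAher : ∀ N : Submodule R A, Module.Projective R N)
    {b : B}
    (hb : EssentialIn (LinearMap.ker (LinearMap.toSpanSingleton R B b)) (⊤ : Submodule R R))
    {a : A} (h : ∀ r : R, r • b = 0 → r • a = 0) : a = 0 := by
  by_contra ha
  set t := LinearMap.toSpanSingleton R A a with ht
  haveI : Module.Projective R (LinearMap.range t) := hAher _
  obtain ⟨hm, hcomp⟩ := Module.projective_lifting_property t.rangeRestrict LinearMap.id
    (LinearMap.surjective_rangeRestrict t)
  have hmem : a ∈ LinearMap.range t := ⟨1, by simp [ht]⟩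
  set ca : LinearMap.range t := ⟨a, hmem⟩ with hca
  set s := hm ca with hs
  have happ : ∀ z : R, ((t.rangeRestrict z : A)) = z • a := fun z => rfl
  have hπs : t.rangeRestrict s = ca := by
    have := LinearMap.congr_fun hcomp ca
    simpa only [LinearMap.comp_apply, LinearMap.id_apply] using this
  have hsne : s ≠ 0 := by
    intro h0
    apply ha
    have h1 : t.rangeRestrict s = 0 := by rw [h0, map_zero]
    have h2 : ca = (0 : LinearMap.range t) := by rw [← hπs, h1]
    simpa [hca] using congrArg Subtype.val h2
  have hbot : LinearMap.ker (LinearMap.toSpanSingleton R B b) ⊓ Submodule.span R {s} = ⊥ := by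
    rw [eq_bot_iff]
    rintro z hz
    obtain ⟨hz1, hz2⟩ := Submodule.mem_inf.mp hz
    obtain ⟨r, rfl⟩ := Submodule.mem_span_singleton.mp hz2
    have hzb : (r • s) • b = 0 := by
      simpa [LinearMap.toSpanSingleton_apply] using hz1
    have hza : (r • s) • a = 0 := h _ hzb
    have heq : r • s = hm (r • ca) := by rw [map_smul, ← hs]
    have h2 : t.rangeRestrict (r • s) = r • ca := by
      rw [heq]
      have := LinearMap.congr_fun hcomp (r • ca)
      simpa only [LinearMap.comp_apply, LinearMap.id_apply] using this
    have h1 : t.rangeRestrict (r • s) = 0 := by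
      apply Subtype.ext
      simpa [happ] using hza
    have : r • ca = (0 : LinearMap.range t) := by rw [← h2, h1]
    show r • s ∈ (⊥ : Submodule R R)
    rw [heq, this, map_zero]
    exact Submodule.zero_mem _
  have hsp := hb.2 _ le_top hbot
  have : s ∈ (⊥ : Submodule R R) := hsp ▸ Submodule.mem_span_singleton_self s
  exact hsne ((Submodule.mem_bot R).mp this)

lemma part1 (hAu : IsUniformModule R A) (hAher : ∀ N : Submodule R A, Module.Projective R N)
    (hBs : IsSingularModule R B) (hBu : IsUniformModule R B) (hBart : IsArtinian R B) :
    IsCSRickart R (A × B) := by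
  intro φ
  set φ1 : A →ₗ[R] A := (LinearMap.fst R A B) ∘ₗ (φ ∘ₗ LinearMap.inl R A B) with hφ1
  set φ2 : A →ₗ[R] B := (LinearMap.snd R A B) ∘ₗ (φ ∘ₗ LinearMap.inl R A B) with hφ2
  set φ3 : B →ₗ[R] B := (LinearMap.snd R A B) ∘ₗ (φ ∘ₗ LinearMap.inr R A B) with hφ3
  have hφ0 : ∀ b : B, (φ (0, b)).1 = 0 := by
    intro b
    apply core_ann hAher (hBs b)
    intro r hr
    have h1 : r • ((0 : A), b) = ((0 : A), r • b) := by simp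
    calc r • (φ (0, b)).1 = (φ (r • ((0 : A), b))).1 := by rw [map_smul]; rfl
    _ = (φ (0, r • b)).1 := by rw [h1]
    _ = 0 := by rw [hr]; exact congrArg Prod.fst (map_zero φ)
  have hφdec : ∀ x : A × B, φ x = (φ1 x.1, φ2 x.1 + φ3 x.2) := by
    rintro ⟨a, b⟩
    have h1 : φ (a, b) = φ (a, 0) + φ (0, b) := by rw [← map_add]; norm_num
    have h2 : φ (a, 0) = (φ1 a, φ2 a) := rfl
    have h3 : φ (0, b) = ((φ (0, b)).1, φ3 b) := rfl
    rw [h1, h2, h3, hφ0 b]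
    simp
  have hker : ∀ x : A × B, x ∈ LinearMap.ker φ ↔ φ1 x.1 = 0 ∧ φ2 x.1 + φ3 x.2 = 0 := by
    intro x
    rw [LinearMap.mem_ker, hφdec, Prod.mk_eq_zero]
  by_cases h3 : LinearMap.ker φ3 = ⊥
  · by_cases h1 : LinearMap.ker φ1 = ⊥
    · -- ker φ = ⊥, take e = 0
      have hkφ : LinearMap.ker φ = ⊥ := by
        rw [eq_bot_iff]
        rintro x hx
        obtain ⟨ha, hb⟩ := (hker x).mp hx
        have hx1 : x.1 = 0 := by
          have : x.1 ∈ LinearMap.ker φ1 := ha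
          rwa [h1, Submodule.mem_bot] at this
        have hx2 : x.2 = 0 := by
          have : φ3 x.2 = 0 := by rw [hx1] at hb; simpa using hb
          have : x.2 ∈ LinearMap.ker φ3 := this
          rwa [h3, Submodule.mem_bot] at this
        simp [Submodule.mem_bot, Prod.ext_iff, hx1, hx2]
      refine ⟨0, by simp [IsIdempotentElem], ?_⟩
      constructor
      · rw [hkφ, LinearMap.range_zero]
      · intro K hK _
        rw [LinearMap.range_zero] at hK
        exact le_bot_iff.mp hK
    · -- graph case
      have inj3 : Function.Injective φ3 := LinearMap.ker_eq_bot.mp h3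
      haveI := hBart
      have surj3 : Function.Surjective φ3 :=
        IsArtinian.surjective_of_injective_endomorphism φ3 inj3
      set ψ := LinearEquiv.ofBijective φ3 ⟨inj3, surj3⟩ with hψ
      set θ : A →ₗ[R] B := -(ψ.symm.toLinearMap ∘ₗ φ2) with hθdef
      have hψap : ∀ y : B, ψ y = φ3 y := fun y => LinearEquiv.ofBijective_apply _ _
      have hθ : ∀ a : A, φ3 (θ a) = -φ2 a := by
        intro a
        have : θ a = -(ψ.symm (φ2 a)) := rfl
        rw [← hψap, this, map_neg, LinearEquiv.apply_symm_apply]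
      set e : Module.End R (A × B) :=
        (LinearMap.fst R A B).prod (θ ∘ₗ LinearMap.fst R A B) with he
      have heap : ∀ x : A × B, e x = (x.1, θ x.1) := fun x => rfl
      have hrange : ∀ x : A × B, x ∈ LinearMap.range e ↔ x.2 = θ x.1 := by
        intro x
        constructor
        · rintro ⟨y, rfl⟩; rfl
        · intro hx
          exact ⟨x, by rw [heap]; exact Prod.ext_iff.mpr ⟨rfl, hx.symm⟩⟩
      refine ⟨e, LinearMap.ext fun x => rfl, ?_, ?_⟩
      · intro x hx
        obtain ⟨ha, hb⟩ := (hker x).mp hx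
        rw [hrange]
        apply inj3
        rw [hθ]
        linear_combination (norm := abel) hb
      · intro K hK hbot
        rw [eq_bot_iff]
        intro x hxK
        rw [Submodule.mem_bot]
        by_contra hx0
        have hx2 : x.2 = θ x.1 := (hrange x).mp (hK hxK)
        have ha : x.1 ≠ 0 := by
          intro h0
          apply hx0
          rw [Prod.ext_iff]
          exact ⟨h0, by rw [hx2, h0, map_zero]; rfl⟩
        obtain ⟨r, hrW, hrne⟩ := ess_elem (hAu _ h1) ha
        have hz : r • x ∈ LinearMap.ker φ ⊓ K := by
          refine Submodule.mem_inf.mpr ⟨?_, ?_⟩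
          · rw [hker]
            constructor
            · exact hrW
            · have : (r • x).2 = θ ((r • x).1) := by
                show r • x.2 = θ (r • x.1)
                rw [hx2, map_smul]
              rw [this, hθ]
              abel
          · exact Submodule.smul_mem K r hxK
        rw [hbot, Submodule.mem_bot] at hz
        apply hrne
        have : (r • x).1 = 0 := by rw [hz]; rfl
        exact this
  · by_cases h1 : LinearMap.ker φ1 = ⊥
    · -- e = projection onto B'
      set e : Module.End R (A × B) := (LinearMap.inr R A B) ∘ₗ (LinearMap.snd R A B) with he
      have heap : ∀ x : A × B, e x = (0, x.2) := fun x => rfl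
      have hrange : ∀ x : A × B, x ∈ LinearMap.range e ↔ x.1 = 0 := by
        intro x
        constructor
        · rintro ⟨y, rfl⟩; rfl
        · intro hx
          exact ⟨x, by rw [heap]; exact Prod.ext_iff.mpr ⟨hx.symm, rfl⟩⟩
      refine ⟨e, ?_, ?_, ?_⟩
      · apply LinearMap.ext
        intro x
        rw [Module.End.mul_apply, heap, heap]
      · intro x hx
        obtain ⟨ha, hb⟩ := (hker x).mp hx
        rw [hrange]
        have : x.1 ∈ LinearMap.ker φ1 := ha
        rwa [h1, Submodule.mem_bot] at this
      · intro K hK hbot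
        rw [eq_bot_iff]
        intro x hxK
        rw [Submodule.mem_bot]
        by_contra hx0
        have hx1 : x.1 = 0 := (hrange x).mp (hK hxK)
        have hb : x.2 ≠ 0 := by
          intro h0
          exact hx0 (Prod.ext_iff.mpr ⟨hx1, h0⟩)
        obtain ⟨r, hrW, hrne⟩ := ess_elem (hBu _ h3) hb
        have hz : r • x ∈ LinearMap.ker φ ⊓ K := by
          refine Submodule.mem_inf.mpr ⟨?_, ?_⟩
          · rw [hker]
            have h1' : (r • x).1 = 0 := by show r • x.1 = 0; rw [hx1, smul_zero]
            rw [h1']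
            constructor
            · rw [map_zero]
            · rw [map_zero, zero_add]
              exact hrW
          · exact Submodule.smul_mem K r hxK
        rw [hbot, Submodule.mem_bot] at hz
        apply hrne
        have : (r • x).2 = 0 := by rw [hz]; rfl
        exact this
    · -- e = 1
      have hW : LinearMap.ker φ1 ⊓ LinearMap.ker φ2 ≠ ⊥ := by
        intro hWbot
        apply h1
        rw [eq_bot_iff]
        intro a ha
        rw [Submodule.mem_bot]
        apply core_ann hAher (hBs (φ2 a))
        intro r hr
        have : r • a ∈ LinearMap.ker φ1 ⊓ LinearMap.ker φ2 := by
          refine Submodule.mem_inf.mpr ⟨Submodule.smul_mem _ r ha, ?_⟩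
          rw [LinearMap.mem_ker, map_smul]
          exact hr
        rw [hWbot, Submodule.mem_bot] at this
        exact this
      have hEW := hAu _ hW
      have hE3 := hBu _ h3
      refine ⟨1, IsIdempotentElem.one, fun x _ => ⟨x, rfl⟩, ?_⟩
      · intro K hK hbot
        rw [eq_bot_iff]
        intro x hxK
        rw [Submodule.mem_bot]
        by_contra hx0
        by_cases ha : x.1 = 0
        · have hb : x.2 ≠ 0 := fun h0 => hx0 (Prod.ext ha h0)
          obtain ⟨r, hrW, hrne⟩ := ess_elem hE3 hb
          have hz : r • x ∈ LinearMap.ker φ ⊓ K := by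
            refine Submodule.mem_inf.mpr ⟨?_, ?_⟩
            · rw [hker]
              have h1' : (r • x).1 = 0 := by show r • x.1 = 0; rw [ha, smul_zero]
              rw [h1', map_zero, map_zero, zero_add]
              exact ⟨rfl, hrW⟩
            · exact Submodule.smul_mem K r hxK
          rw [hbot, Submodule.mem_bot] at hz
          exact hrne (by rw [show r • x.2 = (r • x).2 from rfl, hz]; rfl)
        · obtain ⟨r, hrW, hrne⟩ := ess_elem hEW ha
          obtain ⟨hrW1, hrW2⟩ := Submodule.mem_inf.mp hrW
          by_cases hb : r • x.2 = 0
          · have hz : r • x ∈ LinearMap.ker φ ⊓ K := by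
              refine Submodule.mem_inf.mpr ⟨?_, ?_⟩
              · rw [hker]
                refine ⟨hrW1, ?_⟩
                show φ2 (r • x.1) + φ3 (r • x.2) = 0
                rw [hb, map_zero, add_zero]
                exact hrW2
              · exact Submodule.smul_mem K r hxK
            rw [hbot, Submodule.mem_bot] at hz
            exact hrne (by rw [show r • x.1 = (r • x).1 from rfl, hz]; rfl)
          · obtain ⟨s, hsW, hsne⟩ := ess_elem hE3 hb
            have hz : s • r • x ∈ LinearMap.ker φ ⊓ K := by
              refine Submodule.mem_inf.mpr ⟨?_, ?_⟩
              · rw [hker]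
                constructor
                · show φ1 (s • r • x.1) = 0
                  rw [map_smul, show φ1 (r • x.1) = 0 from hrW1, smul_zero]
                · show φ2 (s • r • x.1) + φ3 (s • r • x.2) = 0
                  rw [map_smul, show φ2 (r • x.1) = 0 from hrW2, smul_zero,
                    show φ3 (s • (r • x.2)) = 0 from hsW, add_zero]
              · exact Submodule.smul_mem K s (Submodule.smul_mem K r hxK)
            rw [hbot, Submodule.mem_bot] at hz
            exact hsne (by rw [show s • (r • x.2) = (s • r • x).2 from rfl, hz]; rfl)

lemma part2 (hAu : IsUniformModule R A) (hAher : ∀ N : Submodule R A, Module.Projective R N)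
    (hBs : IsSingularModule R B) (hCS : IsCSModule R (A × B)) :
    IsRelInjective R A B := by
  intro N f
  by_cases hN : ∀ n : N, (n : A) = 0
  · refine ⟨0, fun a => ?_⟩
    have ha : a = 0 := Subtype.ext (hN a)
    rw [ha]
    simp
  · push_neg at hN
    obtain ⟨n0, hn0⟩ := hN
    set γ : N →ₗ[R] A × B := (N.subtype).prod (-f) with hγ
    have hγap : ∀ n : N, γ n = ((n : A), -f n) := fun n => rfl
    set G := LinearMap.range γ with hG
    obtain ⟨D, ⟨E, hDE⟩, hGD⟩ := hCS G
    set B' := LinearMap.ker (LinearMap.fst R A B) with hB'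
    have hmemB' : ∀ x : A × B, x ∈ B' ↔ x.1 = 0 := fun x => LinearMap.mem_ker
    have hDEbot : D ⊓ E = ⊥ := disjoint_iff.mp hDE.disjoint
    have hDEtop : D ⊔ E = ⊤ := codisjoint_iff.mp hDE.codisjoint
    -- D ⊓ B' = ⊥
    have hDB : D ⊓ B' = ⊥ := by
      apply hGD.2 _ inf_le_left
      rw [eq_bot_iff]
      rintro z hz
      obtain ⟨hzG, hzDB⟩ := Submodule.mem_inf.mp hz
      obtain ⟨hzD, hzB⟩ := Submodule.mem_inf.mp hzDB
      obtain ⟨n, rfl⟩ := hzG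
      have h0 : (n : A) = 0 := by
        have := (hmemB' _).mp hzB
        simpa [hγap] using this
      have hn : n = 0 := Subtype.ext h0
      rw [hn, map_zero]
      exact Submodule.zero_mem _
    -- B' ≤ E
    have hB'E : B' ≤ E := by
      intro x hx
      have hx1 : x.1 = 0 := (hmemB' x).mp hx
      have hxtop : x ∈ D ⊔ E := by rw [hDEtop]; exact Submodule.mem_top
      obtain ⟨d, hd, e', he', hsum⟩ := Submodule.mem_sup.mp hxtop
      have hd1 : d.1 = 0 := by
        apply core_ann hAher (hBs x.2)
        intro r hr
        have hrx : r • x = 0 := by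
          rw [Prod.ext_iff]
          refine ⟨?_, ?_⟩
          · show r • x.1 = 0; rw [hx1, smul_zero]
          · exact hr
        have hsum0 : r • d + r • e' = 0 := by
          rw [← smul_add, hsum, hrx]
        have hde : r • d = -(r • e') := eq_neg_of_add_eq_zero_left hsum0
        have hrdD : r • d ∈ D := Submodule.smul_mem _ r hd
        have hrdE : r • d ∈ E := by
          rw [hde]
          exact Submodule.neg_mem _ (Submodule.smul_mem _ r he')
        have : r • d ∈ D ⊓ E := Submodule.mem_inf.mpr ⟨hrdD, hrdE⟩
        rw [hDEbot, Submodule.mem_bot] at this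
        show r • d.1 = 0
        rw [show r • d.1 = (r • d).1 from rfl, this]
        rfl
      have hdB' : d ∈ B' := (hmemB' d).mpr hd1
      have : d ∈ D ⊓ B' := Submodule.mem_inf.mpr ⟨hd, hdB'⟩
      rw [hDB, Submodule.mem_bot] at this
      rw [← hsum, this, zero_add]
      exact he'
    -- map fst D ≠ ⊥
    have hγn0D : γ n0 ∈ D := hGD.1 ⟨n0, rfl⟩
    have hpD : Submodule.map (LinearMap.fst R A B) D ≠ ⊥ := by
      rw [Submodule.ne_bot_iff]
      refine ⟨(n0 : A), ⟨γ n0, hγn0D, ?_⟩, hn0⟩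
      rw [hγap]
      rfl
    -- E ≤ B'
    have hEB' : E ≤ B' := by
      intro x hxE
      rw [hmemB']
      by_contra hxa
      obtain ⟨r, hr1, hr2⟩ := ess_elem (hAu _ hpD) hxa
      obtain ⟨d, hdD, hdfst⟩ := Submodule.mem_map.mp hr1
      have hdfst' : d.1 = r • x.1 := hdfst
      have hsub : r • x - d ∈ B' := by
        rw [hmemB']
        show (r • x).1 - d.1 = 0
        rw [show (r • x).1 = r • x.1 from rfl, hdfst']
        exact sub_self _
      have hsubE : r • x - d ∈ E := hB'E hsub
      have hdE : d ∈ E := by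
        have hd' : d = r • x - (r • x - d) := by abel
        rw [hd']
        exact Submodule.sub_mem _ (Submodule.smul_mem _ r hxE) hsubE
      have : d ∈ D ⊓ E := Submodule.mem_inf.mpr ⟨hdD, hdE⟩
      rw [hDEbot, Submodule.mem_bot] at this
      apply hr2
      rw [← hdfst', this]
      rfl
    have hEeq : E = B' := le_antisymm hEB' hB'E
    have hcompl : IsCompl B' D := by
      rw [← hEeq]
      exact hDE.symm
    set pr := B'.linearProjOfIsCompl D hcompl with hpr
    refine ⟨(LinearMap.snd R A B) ∘ₗ B'.subtype ∘ₗ pr ∘ₗ LinearMap.inl R A B, fun n => ?_⟩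
    have hγnD : γ n ∈ D := hGD.1 ⟨n, rfl⟩
    have hmem2 : ((0 : A), f n) ∈ B' := (hmemB' _).mpr rfl
    have hkey : pr ((n : A), (0 : B)) = ⟨((0 : A), f n), hmem2⟩ := by
      have hsplit : ((n : A), (0 : B)) = γ n + ((0 : A), f n) := by
        rw [hγap, Prod.ext_iff]
        constructor <;> simp
      rw [hsplit, map_add]
      rw [show pr (γ n) = 0 from Submodule.linearProjOfIsCompl_apply_right hcompl ⟨γ n, hγnD⟩]
      rw [show pr (((0 : A), f n)) = ⟨((0 : A), f n), hmem2⟩ from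
        Submodule.linearProjOfIsCompl_apply_left hcompl ⟨((0 : A), f n), hmem2⟩]
      rw [zero_add]
    simp only [LinearMap.comp_apply]
    rw [show (LinearMap.inl R A B) ((n : A)) = ((n : A), (0 : B)) from rfl, hkey]
    rfl

end AuxLemmas

/-- Let `A` be a uniform hereditary module and `B` a singular uniform Artinian
module. Then `A ⊕ B` is CS-Rickart, and if `B` is not `A`-injective then
`A ⊕ B` is not a CS module. -/
theorem uniform_hereditary_singular_artinian_csRickart
    {R : Type*} [Ring R] {A B : Type*} [AddCommGroup A] [Module R A]
    [AddCommGroup B] [Module R B]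
    (hAu : IsUniformModule R A) (hAher : ∀ N : Submodule R A, Module.Projective R N)
    (hBs : IsSingularModule R B) (hBu : IsUniformModule R B) (hBart : IsArtinian R B) :
    IsCSRickart R (A × B) ∧ (¬ IsRelInjective R A B → ¬ IsCSModule R (A × B)) :=
  ⟨part1 hAu hAher hBs hBu hBart, fun h hCS => h (part2 hAu hAher hBs hCS)⟩

end CSRickartPaper
end

section
/- Let R be a ring. (1) If every right R-module is d-CS-Rickart, then every right R-module is a lifting module. (2) If every right R-module is CS-Rickart, then every right R-module is a CS module. -/
namespace CSRickartPaper

universe v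

section Aux

variable {R : Type*} [Ring R] {M : Type*} [AddCommGroup M] [Module R M]

lemma smallIn_top_of_smallIn {S K : Submodule R M} (h : SmallIn S K) :
    SmallIn S (⊤ : Submodule R M) := by
  refine ⟨le_top, fun T _ hST => ?_⟩
  have h1 := sup_inf_assoc_of_le (x := S) T h.1
  rw [hST, top_inf_eq] at h1
  have h2 : T ⊓ K = K := h.2 _ inf_le_right h1.symm
  have h3 : K ≤ T := by rw [← h2]; exact inf_le_left
  apply top_le_iff.mp
  rw [← hST]
  exact sup_le (h.1.trans h3) le_rfl

lemma smallIn_of_isCompl {S K C : Submodule R M} (h : SmallIn S (⊤ : Submodule R M))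
    (hSK : S ≤ K) (hc : IsCompl K C) : SmallIn S K := by
  refine ⟨hSK, fun T hTK hST => ?_⟩
  have h1 : S ⊔ (T ⊔ C) = ⊤ := by rw [← sup_assoc, hST, hc.sup_eq_top]
  have h2 : T ⊔ C = ⊤ := h.2 _ le_top h1
  have h3 := sup_inf_assoc_of_le (x := T) C hTK
  have hCK : C ⊓ K = ⊥ := by rw [inf_comm]; exact disjoint_iff.mp hc.disjoint
  rw [h2, top_inf_eq, hCK, sup_bot_eq] at h3
  exact h3.symm

variable {P : Type*} [AddCommGroup P] [Module R P]

lemma map_inl_le_range (N : Submodule R M) :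
    N.map (LinearMap.inl R M P) ≤ LinearMap.range (LinearMap.inl R M P) := by
  rintro x ⟨a, _, rfl⟩; exact ⟨a, rfl⟩

lemma isCompl_comap_inl {B C : Submodule R (M × P)}
    (hB : B ≤ LinearMap.range (LinearMap.inl R M P))
    (hmeet : B ⊓ C = ⊥)
    (hjoin : B ⊔ C = LinearMap.range (LinearMap.inl R M P)) :
    IsCompl (B.comap (LinearMap.inl R M P)) (C.comap (LinearMap.inl R M P)) := by
  constructor
  · rw [disjoint_iff, eq_bot_iff]
    intro x hx
    have hx' : (LinearMap.inl R M P) x ∈ B ⊓ C := ⟨hx.1, hx.2⟩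
    rw [hmeet, Submodule.mem_bot] at hx'
    have hx0 : x = 0 := congrArg Prod.fst hx'
    simp [hx0]
  · rw [codisjoint_iff, eq_top_iff]
    intro x _
    have hx : (LinearMap.inl R M P) x ∈ B ⊔ C := by
      rw [hjoin]; exact LinearMap.mem_range_self _ x
    obtain ⟨b, hb, c, hc, hbc⟩ := Submodule.mem_sup.mp hx
    obtain ⟨mb, hmb⟩ := hB hb
    refine Submodule.mem_sup.mpr ⟨mb, Submodule.mem_comap.mpr (by rw [hmb]; exact hb),
      x - mb, Submodule.mem_comap.mpr ?_, by abel⟩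
    have hcc : (LinearMap.inl R M P) (x - mb) = c := by
      rw [map_sub, hmb, ← hbc]; abel
    rw [hcc]; exact hc

lemma essentialIn_comap_inl {A : Submodule R M} {B : Submodule R (M × P)}
    (h : EssentialIn (A.map (LinearMap.inl R M P)) B) :
    EssentialIn A (B.comap (LinearMap.inl R M P)) := by
  constructor
  · intro a ha
    exact Submodule.mem_comap.mpr (h.1 (Submodule.mem_map_of_mem ha))
  · intro K hK h0
    have hmap : K.map (LinearMap.inl R M P) = ⊥ := by
      apply h.2 _ (Submodule.map_le_iff_le_comap.mpr hK)
      rw [eq_bot_iff]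
      rintro x ⟨hx1, hx2⟩
      obtain ⟨a, ha, rfl⟩ := hx1
      obtain ⟨k, hk, hk2⟩ := hx2
      have hka : k = a := LinearMap.inl_injective hk2
      subst hka
      have : k ∈ A ⊓ K := ⟨ha, hk⟩
      rw [h0, Submodule.mem_bot] at this
      simp [this]
    rw [eq_bot_iff]
    intro k hk
    have : (LinearMap.inl R M P) k ∈ (⊥ : Submodule R (M × P)) := by
      rw [← hmap]; exact Submodule.mem_map_of_mem hk
    rw [Submodule.mem_bot] at this
    have : k = 0 := congrArg Prod.fst this
    simp [this]

lemma smallIn_comap_inl {S B : Submodule R (M × P)}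
    (hS : S ≤ LinearMap.range (LinearMap.inl R M P))
    (hB : B ≤ LinearMap.range (LinearMap.inl R M P))
    (h : SmallIn S B) :
    SmallIn (S.comap (LinearMap.inl R M P)) (B.comap (LinearMap.inl R M P)) := by
  refine ⟨Submodule.comap_mono h.1, fun T hT hST => ?_⟩
  have hmap : S ⊔ T.map (LinearMap.inl R M P) = B := by
    have h1 := congrArg (Submodule.map (LinearMap.inl R M P)) hST
    rwa [Submodule.map_sup, Submodule.map_comap_eq_self hS, Submodule.map_comap_eq_self hB] at h1
  have hTB : T.map (LinearMap.inl R M P) = B :=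
    h.2 _ (Submodule.map_le_iff_le_comap.mpr hT) hmap
  refine le_antisymm hT (fun x hx => ?_)
  have : (LinearMap.inl R M P) x ∈ T.map (LinearMap.inl R M P) := by rw [hTB]; exact hx
  obtain ⟨t, ht, ht2⟩ := this
  rwa [← LinearMap.inl_injective ht2]

lemma isCompl_inf_sup {W : Type*} [AddCommGroup W] [Module R W]
    {A Z B C : Submodule R W} (hAZ : IsCompl A Z) (hBC : IsCompl B C) (hZB : Z ≤ B) :
    IsCompl (B ⊓ A) (Z ⊔ C) := by
  constructor
  · rw [disjoint_iff, eq_bot_iff]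
    intro x hx
    obtain ⟨⟨hxB, hxA⟩, hx2⟩ := hx
    obtain ⟨z, hz, c, hc, hzc⟩ := Submodule.mem_sup.mp hx2
    have hcB : c ∈ B := by
      have hc' : c = x - z := by rw [← hzc]; abel
      rw [hc']; exact Submodule.sub_mem _ hxB (hZB hz)
    have hc0 : c = 0 := by
      have : c ∈ B ⊓ C := ⟨hcB, hc⟩
      rwa [disjoint_iff.mp hBC.disjoint, Submodule.mem_bot] at this
    have hxz : x = z := by rw [← hzc, hc0, add_zero]
    have : x ∈ A ⊓ Z := ⟨hxA, hxz ▸ hz⟩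
    rwa [inf_comm, disjoint_iff.mp hAZ.symm.disjoint] at this
  · rw [codisjoint_iff]
    have h1 : Z ⊔ (A ⊓ B) = B := by
      have h2 := sup_inf_assoc_of_le (x := Z) A hZB
      rw [sup_comm Z A, hAZ.sup_eq_top, top_inf_eq] at h2
      exact h2.symm
    rw [inf_comm, ← sup_assoc, sup_comm (A ⊓ B) Z, h1, hBC.sup_eq_top]

lemma isCompl_inf_sup' {W : Type*} [AddCommGroup W] [Module R W]
    {A Z D K : Submodule R W} (hAZ : IsCompl A Z) (hDK : IsCompl D K) (hDA : D ≤ A) :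
    IsCompl (K ⊓ A) (D ⊔ Z) := by
  constructor
  · rw [disjoint_iff, eq_bot_iff]
    intro x hx
    obtain ⟨⟨hxK, hxA⟩, hx2⟩ := hx
    obtain ⟨d, hd, z, hz, hdz⟩ := Submodule.mem_sup.mp hx2
    have hzA : z ∈ A := by
      have hz' : z = x - d := by rw [← hdz]; abel
      rw [hz']; exact Submodule.sub_mem _ hxA (hDA hd)
    have hz0 : z = 0 := by
      have : z ∈ A ⊓ Z := ⟨hzA, hz⟩
      rwa [disjoint_iff.mp hAZ.disjoint, Submodule.mem_bot] at this
    have hxd : x = d := by rw [← hdz, hz0, add_zero]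
    have : x ∈ D ⊓ K := ⟨hxd ▸ hd, hxK⟩
    rwa [disjoint_iff.mp hDK.disjoint] at this
  · rw [codisjoint_iff]
    have h1 : D ⊔ (K ⊓ A) = A := by
      have h2 := sup_inf_assoc_of_le (x := D) K hDA
      rw [hDK.sup_eq_top, top_inf_eq] at h2
      exact h2.symm
    rw [← sup_assoc, sup_comm (K ⊓ A) D, h1, hAZ.sup_eq_top]

lemma isCompl_range_ker_of_idem {W : Type*} [AddCommGroup W] [Module R W]
    {e : Module.End R W} (he : IsIdempotentElem e) :
    IsCompl (LinearMap.range e) (LinearMap.ker e) := by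
  constructor
  · rw [disjoint_iff, eq_bot_iff]
    intro x hx
    obtain ⟨hr, hk⟩ := Submodule.mem_inf.mp hx
    obtain ⟨y, rfl⟩ := hr
    have hk' : e (e y) = 0 := hk
    have h1 : e (e y) = e y := by rw [← Module.End.mul_apply, he]
    rw [Submodule.mem_bot, ← h1]
    exact hk'
  · rw [codisjoint_iff, eq_top_iff]
    intro x _
    refine Submodule.mem_sup.mpr ⟨e x, ⟨x, rfl⟩, x - e x, ?_, by abel⟩
    rw [LinearMap.mem_ker, map_sub, ← Module.End.mul_apply, he, sub_self]

end Aux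

section Red

variable {R : Type*} [Ring R] {M : Type*} [AddCommGroup M] [Module R M]
  {P : Type*} [AddCommGroup P] [Module R P]

lemma liesAboveSummand_of_prod {N : Submodule R M}
    (h : LiesAboveSummand (N.map (LinearMap.inl R M P))) :
    LiesAboveSummand N := by
  obtain ⟨D₀, K, hcompl, hD₀N, hsmall⟩ := h
  have hNA := map_inl_le_range (P := P) N
  have hDA : D₀ ≤ LinearMap.range (LinearMap.inl R M P) := hD₀N.trans hNA
  have hAZ : IsCompl (LinearMap.range (LinearMap.inl R M P))
      (LinearMap.range (LinearMap.inr R M P)) := LinearMap.isCompl_range_inl_inr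
  set K' : Submodule R (M × P) := K ⊓ LinearMap.range (LinearMap.inl R M P) with hK'def
  have hjoin : D₀ ⊔ K' = LinearMap.range (LinearMap.inl R M P) := by
    have h1 := sup_inf_assoc_of_le (x := D₀) K hDA
    rw [hcompl.sup_eq_top, top_inf_eq] at h1
    exact h1.symm
  have hmeet : D₀ ⊓ K' = ⊥ := by
    rw [eq_bot_iff]
    exact le_trans (inf_le_inf_left _ inf_le_left) (disjoint_iff.mp hcompl.disjoint).le
  have hK'c : IsCompl K' (D₀ ⊔ LinearMap.range (LinearMap.inr R M P)) :=
    isCompl_inf_sup' hAZ hcompl hDA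
  set S : Submodule R (M × P) := N.map (LinearMap.inl R M P) ⊓ K with hSdef
  have hSK' : S ≤ K' := le_inf inf_le_right (inf_le_left.trans hNA)
  have hS' : N.map (LinearMap.inl R M P) ⊓ K' = S :=
    le_antisymm (inf_le_inf_left _ inf_le_left) (le_inf inf_le_left hSK')
  have hsmallK' : SmallIn S K' :=
    smallIn_of_isCompl (smallIn_top_of_smallIn hsmall) hSK' hK'c
  have hsmallc : SmallIn (S.comap (LinearMap.inl R M P)) (K'.comap (LinearMap.inl R M P)) :=
    smallIn_comap_inl (hSK'.trans inf_le_right) inf_le_right hsmallK'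
  have heq : S.comap (LinearMap.inl R M P) = N ⊓ K'.comap (LinearMap.inl R M P) := by
    rw [← hS', Submodule.comap_inf,
      Submodule.comap_map_eq_of_injective LinearMap.inl_injective]
  refine ⟨D₀.comap (LinearMap.inl R M P), K'.comap (LinearMap.inl R M P),
    isCompl_comap_inl hDA hmeet hjoin, ?_, ?_⟩
  · intro x hx
    obtain ⟨n, hn, hnx⟩ := hD₀N hx
    exact LinearMap.inl_injective hnx ▸ hn
  · rw [← heq]
    exact hsmallc

lemma csSummand_of_prod {N : Submodule R M} {e : Module.End R (M × P)}
    (hess : EssentialIn (N.prod (⊤ : Submodule R P)) (LinearMap.range e))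
    (hBC : IsCompl (LinearMap.range e) (LinearMap.ker e)) :
    ∃ D : Submodule R M, IsDirectSummand D ∧ EssentialIn N D := by
  have hAZ : IsCompl (LinearMap.range (LinearMap.inl R M P))
      (LinearMap.range (LinearMap.inr R M P)) := LinearMap.isCompl_range_inl_inr
  have hZB : LinearMap.range (LinearMap.inr R M P) ≤ LinearMap.range e := by
    rintro x ⟨p, rfl⟩
    exact hess.1 (Submodule.mem_prod.mpr ⟨N.zero_mem, Submodule.mem_top⟩)
  set P' : Submodule R (M × P) :=
    LinearMap.range e ⊓ LinearMap.range (LinearMap.inl R M P) with hP'def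
  have hP'c : IsCompl P' (LinearMap.range (LinearMap.inr R M P) ⊔ LinearMap.ker e) :=
    isCompl_inf_sup hAZ hBC hZB
  set C' : Submodule R (M × P) :=
    (LinearMap.range (LinearMap.inr R M P) ⊔ LinearMap.ker e) ⊓
      LinearMap.range (LinearMap.inl R M P) with hC'def
  have hjoin : P' ⊔ C' = LinearMap.range (LinearMap.inl R M P) := by
    have h1 := sup_inf_assoc_of_le (x := P')
      (LinearMap.range (LinearMap.inr R M P) ⊔ LinearMap.ker e)
      (inf_le_right : P' ≤ LinearMap.range (LinearMap.inl R M P))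
    rw [hP'c.sup_eq_top, top_inf_eq] at h1
    exact h1.symm
  have hmeet : P' ⊓ C' = ⊥ := by
    rw [eq_bot_iff]
    exact le_trans (inf_le_inf_left _ inf_le_left) (disjoint_iff.mp hP'c.disjoint).le
  refine ⟨P'.comap (LinearMap.inl R M P),
    ⟨C'.comap (LinearMap.inl R M P), isCompl_comap_inl inf_le_right hmeet hjoin⟩, ?_⟩
  apply essentialIn_comap_inl
  constructor
  · rintro x ⟨n, hn, rfl⟩
    refine Submodule.mem_inf.mpr ⟨hess.1 (Submodule.mem_prod.mpr ⟨?_, Submodule.mem_top⟩),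
      ⟨n, rfl⟩⟩
    simpa using hn
  · intro K hK h0
    apply hess.2 K (hK.trans inf_le_left)
    rw [eq_bot_iff]
    intro x hx
    obtain ⟨hx1, hxK⟩ := Submodule.mem_inf.mp hx
    obtain ⟨m, rfl⟩ := (hK hxK).2
    have hmN : m ∈ N := by simpa using (Submodule.mem_prod.mp hx1).1
    have : (LinearMap.inl R M P) m ∈ N.map (LinearMap.inl R M P) ⊓ K :=
      Submodule.mem_inf.mpr ⟨Submodule.mem_map_of_mem hmN, hxK⟩
    rwa [h0] at this

end Red

/-- (1) If every `R`-module is d-CS-Rickart then every `R`-module is lifting.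
(2) If every `R`-module is CS-Rickart then every `R`-module is CS. -/
theorem all_dcsRickart_lifting_all_csRickart_cs
    {R : Type*} [Ring R] :
    ((∀ (M : Type v) [AddCommGroup M] [Module R M], IsDCSRickart R M) →
      ∀ (M : Type v) [AddCommGroup M] [Module R M], IsLifting R M) ∧
    ((∀ (M : Type v) [AddCommGroup M] [Module R M], IsCSRickart R M) →
      ∀ (M : Type v) [AddCommGroup M] [Module R M], IsCSModule R M) := by
  constructor
  · intro h M _ _ N
    have hdcs := h (M × N) (((LinearMap.inl R M N).comp N.subtype).comp (LinearMap.snd R M N))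
    have hrange : LinearMap.range (((LinearMap.inl R M N).comp N.subtype).comp
        (LinearMap.snd R M N)) = N.map (LinearMap.inl R M N) := by
      ext x
      simp only [LinearMap.mem_range, Submodule.mem_map, LinearMap.coe_comp,
        Function.comp_apply, LinearMap.snd_apply, Submodule.coe_subtype]
      constructor
      · rintro ⟨⟨m, n⟩, rfl⟩
        exact ⟨n, n.2, rfl⟩
      · rintro ⟨y, hy, rfl⟩
        exact ⟨(0, ⟨y, hy⟩), rfl⟩
    rw [hrange] at hdcs
    exact liesAboveSummand_of_prod hdcs
  · intro h M _ _ N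
    obtain ⟨e, he, hess⟩ := h (M × (M ⧸ N))
      (((LinearMap.inr R M (M ⧸ N)).comp N.mkQ).comp (LinearMap.fst R M (M ⧸ N)))
    have hker : LinearMap.ker (((LinearMap.inr R M (M ⧸ N)).comp N.mkQ).comp
        (LinearMap.fst R M (M ⧸ N))) = N.prod ⊤ := by
      ext ⟨m, x⟩
      simp [LinearMap.mem_ker, Prod.ext_iff, Submodule.Quotient.mk_eq_zero]
    rw [hker] at hess
    exact csSummand_of_prod hess (isCompl_range_ker_of_idem he)

end CSRickartPaper
end

section
/- For a right R-module M, the following are equivalent: (1) M is a K-nonsingular CS-Rickart module; (2) M is a Rickart module. -/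
namespace CSRickartPaper

/-- `M` is a K-nonsingular CS-Rickart module iff `M` is a Rickart module. -/
theorem kNonsingular_csRickart_iff_rickart
    {R : Type*} [Ring R] {M : Type*} [AddCommGroup M] [Module R M] :
    (IsKNonsingular R M ∧ IsCSRickart R M) ↔ IsRickart R M := by
  constructor
  · rintro ⟨hK, hCS⟩ φ
    obtain ⟨e, he, hle, hess⟩ := hCS φ
    refine ⟨e, he, le_antisymm hle ?_⟩
    have hefix : ∀ x ∈ LinearMap.range e, e x = x := by
      rintro x ⟨y, rfl⟩
      have := congrArg (fun f : Module.End R M => f y) he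
      simpa using this
    set N := LinearMap.ker φ with hN
    set E := N ⊔ LinearMap.ker e with hE
    have hEss : EssentialIn E (⊤ : Submodule R M) := by
      refine ⟨le_top, fun K _ h0 => ?_⟩
      have hmap : Submodule.map e K = ⊥ := by
        apply hess (Submodule.map e K)
          (by rintro x ⟨k, -, rfl⟩; exact ⟨k, rfl⟩)
        rw [Submodule.eq_bot_iff]
        rintro x ⟨hxN, k, hk, rfl⟩
        have hk' : k ∈ E := by
          have h1 : k - e k ∈ LinearMap.ker e := by
            rw [LinearMap.mem_ker, map_sub]
            have := congrArg (fun f : Module.End R M => f k) he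
            exact sub_eq_zero_of_eq this.symm
          have hkeq : k = e k + (k - e k) := by abel
          rw [hkeq]
          exact Submodule.add_mem _ (Submodule.mem_sup_left hxN)
            (Submodule.mem_sup_right h1)
        have hmem : k ∈ E ⊓ K := ⟨hk', hk⟩
        rw [h0, Submodule.mem_bot] at hmem
        rw [hmem]
        exact map_zero e
      have hKle : K ≤ LinearMap.ker e := by
        intro k hk
        have : e k ∈ Submodule.map e K := ⟨k, hk, rfl⟩
        rw [hmap] at this
        exact this
      have hKE : K ≤ E := le_trans hKle le_sup_right
      calc K = E ⊓ K := (inf_eq_right.mpr hKE).symm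
        _ = ⊥ := h0
    have hEle : E ≤ LinearMap.ker (φ * e) := by
      apply sup_le
      · intro x hx
        have hx' : e x = x := hefix x (hle hx)
        rw [LinearMap.mem_ker, Module.End.mul_apply, hx']
        exact LinearMap.mem_ker.mp hx
      · intro x hx
        rw [LinearMap.mem_ker, Module.End.mul_apply, LinearMap.mem_ker.mp hx,
          map_zero]
    have h0 : φ * e = 0 := hK (φ * e) E hEss hEle
    rintro x ⟨y, rfl⟩
    have h1 : (φ * e) y = 0 := by rw [h0]; exact rfl
    rw [Module.End.mul_apply] at h1
    exact h1
  · intro hR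
    constructor
    · intro φ N hess hle
      obtain ⟨e, he, hker⟩ := hR φ
      have hefix : ∀ x ∈ LinearMap.range e, e x = x := by
        rintro x ⟨y, rfl⟩
        have := congrArg (fun f : Module.End R M => f y) he
        simpa using this
      have hkerE : LinearMap.ker e = ⊥ := by
        apply hess.2 (LinearMap.ker e) le_top
        rw [Submodule.eq_bot_iff]
        rintro x ⟨hx1, hx2⟩
        have hx1' : x ∈ LinearMap.range e := hker ▸ hle hx1
        have hfix := hefix x hx1'
        rw [LinearMap.mem_ker.mp hx2] at hfix
        exact hfix.symm
      have hall : ∀ x : M, e x = x := by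
        intro x
        have hmem : x - e x ∈ LinearMap.ker e := by
          rw [LinearMap.mem_ker, map_sub]
          have := congrArg (fun f : Module.End R M => f x) he
          exact sub_eq_zero_of_eq this.symm
        rw [hkerE, Submodule.mem_bot] at hmem
        exact (sub_eq_zero.mp hmem).symm
      ext x
      have : x ∈ LinearMap.ker φ := by
        rw [hker]
        exact ⟨x, hall x⟩
      simpa using this
    · intro φ
      obtain ⟨e, he, hker⟩ := hR φ
      refine ⟨e, he, hker ▸ ⟨le_refl _, fun K hK h0 => ?_⟩⟩
      rwa [inf_eq_right.mpr hK] at h0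

end CSRickartPaper
end

section
/- Let M be a CS-Rickart right R-module and S = End(M). Then: (1) for any idempotents e, f ∈ S there exists an idempotent g ∈ S such that eM ∩ fM is essential in gM; (2) if A is essential in eM and B is essential in fM for idempotents e, f ∈ S, then there exists an idempotent g ∈ S with A ∩ B essential in gM; (3) for any φ₁, …, φₙ ∈ S there exists an idempotent e ∈ S such that ∩_{1≤i≤n} ker φᵢ is essential in eM; (4) M is an SIP-CS module. -/
namespace CSRickartPaper

section Aux

variable {R : Type*} [Ring R] {M : Type*} [AddCommGroup M] [Module R M]

lemma mem_range_idem {e : Module.End R M} (he : IsIdempotentElem e) {x : M} :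
    x ∈ LinearMap.range e ↔ e x = x := by
  constructor
  · rintro ⟨y, rfl⟩
    show (e * e) y = e y
    rw [he]
  · intro hx; exact ⟨x, hx⟩

lemma isCompl_range_ker_idem {e : Module.End R M} (he : IsIdempotentElem e) :
    IsCompl (LinearMap.range e) (LinearMap.ker e) := by
  constructor
  · rw [disjoint_iff, eq_bot_iff]
    intro x hx
    obtain ⟨hr, hk⟩ := Submodule.mem_inf.1 hx
    rw [LinearMap.mem_ker] at hk
    rw [Submodule.mem_bot, ← (mem_range_idem he).1 hr, hk]
  · rw [codisjoint_iff, eq_top_iff]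
    intro x _
    have h1 : e x ∈ LinearMap.range e := ⟨x, rfl⟩
    have h2 : x - e x ∈ LinearMap.ker e := by
      rw [LinearMap.mem_ker, map_sub]
      show e x - (e * e) x = 0
      rw [he, sub_self]
    have : x = e x + (x - e x) := by abel
    rw [this]
    exact Submodule.add_mem_sup h1 h2

lemma exists_idem_range_eq {D K : Submodule R M} (h : IsCompl D K) :
    ∃ e : Module.End R M, IsIdempotentElem e ∧ LinearMap.range e = D := by
  refine ⟨D.subtype ∘ₗ D.projectionOnto K h, ?_, ?_⟩
  · ext x
    show D.subtype (D.projectionOnto K h (D.subtype (D.projectionOnto K h x)))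
      = D.subtype (D.projectionOnto K h x)
    simp [Submodule.subtype_apply, Submodule.projectionOnto_apply_left h]
  · apply le_antisymm
    · rintro x ⟨y, rfl⟩
      exact (D.projectionOnto K h y).2
    · intro d hd
      refine ⟨d, ?_⟩
      show D.subtype (D.projectionOnto K h d) = d
      rw [show d = ((⟨d, hd⟩ : D) : M) from rfl, Submodule.projectionOnto_apply_left h]
      rfl

lemma EssentialIn.trans' {N P Q : Submodule R M} (h1 : EssentialIn N P)
    (h2 : EssentialIn P Q) : EssentialIn N Q := by
  refine ⟨h1.1.trans h2.1, fun K hK hNK => ?_⟩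
  have hb : N ⊓ (P ⊓ K) = ⊥ := by
    rw [← le_bot_iff, ← hNK]
    exact inf_le_inf_left N inf_le_right
  exact h2.2 K hK (h1.2 (P ⊓ K) inf_le_left hb)

lemma EssentialIn.inf' {A P B Q : Submodule R M} (hA : EssentialIn A P)
    (hB : EssentialIn B Q) : EssentialIn (A ⊓ B) (P ⊓ Q) := by
  refine ⟨inf_le_inf hA.1 hB.1, fun K hK hABK => ?_⟩
  have h0 : B ⊓ (A ⊓ K) = ⊥ := by rw [inf_left_comm, ← inf_assoc, hABK]
  have h1 : A ⊓ K = ⊥ :=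
    hB.2 (A ⊓ K) ((inf_le_right.trans hK).trans inf_le_right) h0
  exact hA.2 K (hK.trans inf_le_left) h1

lemma summand_inter_summand (h : IsCSRickart R M) (e f : Module.End R M)
    (he : IsIdempotentElem e) (hf : IsIdempotentElem f) :
    ∃ g : Module.End R M, IsIdempotentElem g ∧
      EssentialIn (LinearMap.range e ⊓ LinearMap.range f) (LinearMap.range g) := by
  obtain ⟨g, hg, hess⟩ := h ((1 - f) * e)
  set φ := (1 - f) * e with hφ
  have hφapp : ∀ x, φ x = e x - f (e x) := fun x => by
    simp [hφ, Module.End.mul_apply, LinearMap.sub_apply]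
  set E := LinearMap.range e with hE
  set F := LinearMap.range f with hF
  set G := LinearMap.range g with hG
  set E' := LinearMap.ker e with hE'
  have fact1 : E' ≤ LinearMap.ker φ := by
    intro x hx
    rw [hE', LinearMap.mem_ker] at hx
    rw [LinearMap.mem_ker, hφapp, hx, map_zero, sub_zero]
  have fact2a : E ⊓ F ≤ LinearMap.ker φ := by
    rintro x ⟨hxE, hxF⟩
    rw [LinearMap.mem_ker, hφapp, (mem_range_idem he).1 hxE, (mem_range_idem hf).1 hxF,
      sub_self]
  have fact2b : ∀ x, x ∈ E → x ∈ LinearMap.ker φ → x ∈ F := by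
    intro x hxE hxk
    rw [LinearMap.mem_ker, hφapp, (mem_range_idem he).1 hxE, sub_eq_zero] at hxk
    exact (mem_range_idem hf).2 hxk.symm
  have hE'G : E' ≤ G := fact1.trans hess.1
  have hEFG : E ⊓ F ≤ G := fact2a.trans hess.1
  have hsupTop : E' ⊔ E = ⊤ :=
    codisjoint_iff.1 (isCompl_range_ker_idem he).symm.codisjoint
  have hGdec : G = E' ⊔ (E ⊓ G) := by
    have h2 := sup_inf_assoc_of_le (x := E') E (z := G) hE'G
    rw [hsupTop, top_inf_eq] at h2
    exact h2
  have hcompl : IsCompl (E ⊓ G) (E' ⊔ LinearMap.ker g) := by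
    constructor
    · rw [disjoint_iff, eq_bot_iff]
      intro x hx
      obtain ⟨hxEG, hxsup⟩ := Submodule.mem_inf.1 hx
      obtain ⟨a, ha, b, hb, hab⟩ := Submodule.mem_sup.1 hxsup
      have hbG : b ∈ G := by
        have h3 := Submodule.sub_mem G hxEG.2 (hE'G ha)
        rwa [← hab, add_sub_cancel_left] at h3
      have hb0 : b = 0 := by
        rw [← (mem_range_idem hg).1 hbG]
        exact hb
      have hxa : x = a := by rw [← hab, hb0, add_zero]
      have : e x = 0 := by rw [hxa]; exact ha
      rw [Submodule.mem_bot, ← (mem_range_idem he).1 hxEG.1, this]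
    · rw [codisjoint_iff, ← sup_assoc, sup_comm (E ⊓ G) E', ← hGdec]
      exact codisjoint_iff.1 (isCompl_range_ker_idem hg).codisjoint
  obtain ⟨p, hp, hrange⟩ := exists_idem_range_eq hcompl
  refine ⟨p, hp, ?_⟩
  rw [hrange]
  refine ⟨le_inf inf_le_left hEFG, fun K hK hEFK => ?_⟩
  have hker : LinearMap.ker φ ⊓ K = ⊥ := by
    rw [eq_bot_iff]
    rintro x ⟨hxk, hxK⟩
    have hxE : x ∈ E := (hK hxK).1
    have hxF : x ∈ F := fact2b x hxE hxk
    have : x ∈ (E ⊓ F) ⊓ K := ⟨⟨hxE, hxF⟩, hxK⟩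
    rwa [hEFK] at this
  exact hess.2 K (hK.trans inf_le_right) hker

end Aux

/-- Properties of CS-Rickart modules: intersections of direct summands are
essential in direct summands, finite intersections of kernels are essential in
direct summands, and `M` has the SIP-CS property. -/
theorem csRickart_sipCS
    {R : Type*} [Ring R] {M : Type*} [AddCommGroup M] [Module R M]
    (h : IsCSRickart R M) :
    (∀ e f : Module.End R M, IsIdempotentElem e → IsIdempotentElem f →
      ∃ g : Module.End R M, IsIdempotentElem g ∧
        EssentialIn (LinearMap.range e ⊓ LinearMap.range f) (LinearMap.range g)) ∧
    (∀ (e f : Module.End R M) (A B : Submodule R M),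
      IsIdempotentElem e → IsIdempotentElem f →
      EssentialIn A (LinearMap.range e) → EssentialIn B (LinearMap.range f) →
      ∃ g : Module.End R M, IsIdempotentElem g ∧ EssentialIn (A ⊓ B) (LinearMap.range g)) ∧
    (∀ (n : ℕ) (φ : Fin n → Module.End R M),
      ∃ e : Module.End R M, IsIdempotentElem e ∧
        EssentialIn (⨅ i, LinearMap.ker (φ i)) (LinearMap.range e)) ∧
    IsSIPCS R M := by
  have part2 : ∀ (e f : Module.End R M) (A B : Submodule R M),
      IsIdempotentElem e → IsIdempotentElem f →
      EssentialIn A (LinearMap.range e) → EssentialIn B (LinearMap.range f) →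
      ∃ g : Module.End R M, IsIdempotentElem g ∧
        EssentialIn (A ⊓ B) (LinearMap.range g) := by
    intro e f A B he hf hA hB
    obtain ⟨g, hg, hEF⟩ := summand_inter_summand h e f he hf
    exact ⟨g, hg, (hA.inf' hB).trans' hEF⟩
  refine ⟨fun e f he hf => summand_inter_summand h e f he hf, part2, ?_, ?_⟩
  · intro n
    induction n with
    | zero =>
      intro φ
      refine ⟨1, IsIdempotentElem.one, ?_⟩
      have h0 : (⨅ i : Fin 0, LinearMap.ker (φ i)) = ⊤ := by simp
      have h1 : LinearMap.range (1 : Module.End R M) = ⊤ :=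
        LinearMap.range_eq_top.2 fun x => ⟨x, rfl⟩
      rw [h0, h1]
      exact ⟨le_rfl, fun K _ hK => by rwa [top_inf_eq] at hK⟩
    | succ n ih =>
      intro φ
      obtain ⟨e, he, hesse⟩ := h (φ 0)
      obtain ⟨f, hf, hessf⟩ := ih (fun i => φ i.succ)
      have hinf : (⨅ i, LinearMap.ker (φ i)) =
          LinearMap.ker (φ 0) ⊓ ⨅ i : Fin n, LinearMap.ker (φ i.succ) := by
        apply le_antisymm
        · exact le_inf (iInf_le _ 0) (le_iInf fun i => iInf_le _ i.succ)
        · refine le_iInf fun i => ?_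
          refine Fin.cases ?_ ?_ i
          · exact inf_le_left
          · exact fun j => inf_le_right.trans (iInf_le _ j)
      rw [hinf]
      exact part2 e f _ _ he hf hesse hessf
  · rintro A B ⟨A', hA⟩ ⟨B', hB⟩
    obtain ⟨e, he, hre⟩ := exists_idem_range_eq hA
    obtain ⟨f, hf, hrf⟩ := exists_idem_range_eq hB
    obtain ⟨g, hg, hess⟩ := summand_inter_summand h e f he hf
    rw [hre, hrf] at hess
    exact ⟨LinearMap.range g, ⟨LinearMap.ker g, isCompl_range_ker_idem hg⟩, hess⟩


end CSRickartPaper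
end

section
/- Let R be a right ACS ring. Then for any elements x₁, …, xₙ of R there exists an idempotent e ∈ R such that the right annihilator r_R(x₁,…,xₙ) = {r ∈ R : xᵢr = 0 for all i} is essential in eR. -/
namespace CSRickartPaper

section Aux

variable {R : Type*} [Ring R]

lemma mem_annElem {a r : R} : r ∈ annElem R a ↔ r * a = 0 := by
  simp [annElem, LinearMap.toSpanSingleton_apply, smul_eq_mul]

lemma mem_idealGen {e r : R} : r ∈ idealGen R e ↔ ∃ s, s * e = r := by
  simp [idealGen, LinearMap.toSpanSingleton_apply, smul_eq_mul]

lemma mem_idealGen_iff_mul {e : R} (he : IsIdempotentElem e) {r : R} :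
    r ∈ idealGen R e ↔ r * e = r := by
  constructor
  · rintro h
    obtain ⟨s, rfl⟩ := mem_idealGen.mp h
    rw [mul_assoc, he.eq]
  · intro h
    exact mem_idealGen.mpr ⟨r, h⟩

lemma mul_mem_left {D : Submodule R R} {d : R} (hd : d ∈ D) (x : R) : x * d ∈ D := by
  simpa [smul_eq_mul] using Submodule.smul_mem D x hd

lemma idealGen_inf_one_sub {e : R} (he : IsIdempotentElem e) :
    idealGen R e ⊓ idealGen R (1 - e) = ⊥ := by
  ext t
  simp only [Submodule.mem_inf, Submodule.mem_bot]
  constructor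
  · rintro ⟨h1, h2⟩
    have h1' := (mem_idealGen_iff_mul he).mp h1
    have h2' := (mem_idealGen_iff_mul he.one_sub).mp h2
    calc t = t * e := h1'.symm
      _ = (t * (1 - e)) * e := by rw [h2']
      _ = 0 := by rw [mul_assoc, sub_mul, one_mul, he.eq, sub_self, mul_zero]
  · rintro rfl
    exact ⟨Submodule.zero_mem _, Submodule.zero_mem _⟩

/-- A direct summand of `R` (as left module over itself) is generated by an
idempotent. -/
lemma summand_is_idealGen {D K : Submodule R R} (h : IsCompl D K) :
    ∃ d : R, IsIdempotentElem d ∧ idealGen R d = D := by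
  have h1 : (1 : R) ∈ D ⊔ K := by rw [h.sup_eq_top]; trivial
  obtain ⟨d, hd, k, hk, hdk⟩ := Submodule.mem_sup.mp h1
  have key : ∀ x ∈ D, x * d = x := by
    intro x hx
    have hx1 : x * d + x * k = x := by rw [← mul_add, hdk, mul_one]
    have hxk : x * k ∈ D := by
      have hxd : x * d ∈ D := mul_mem_left hd x
      have : x * k = x - x * d := by exact (eq_sub_of_add_eq' hx1)
      rw [this]; exact Submodule.sub_mem D hx hxd
    have hxk' : x * k ∈ K := mul_mem_left hk x
    have hzero : x * k = 0 := by
      have := h.disjoint.le_bot (Submodule.mem_inf.mpr ⟨hxk, hxk'⟩ : x * k ∈ D ⊓ K)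
      simpa using this
    rw [hzero, add_zero] at hx1
    exact hx1
  refine ⟨d, key d hd, le_antisymm ?_ ?_⟩
  · intro t ht
    obtain ⟨s, rfl⟩ := mem_idealGen.mp ht
    exact mul_mem_left hd s
  · intro t ht
    exact mem_idealGen.mpr ⟨t, key t ht⟩

end Aux

/-- In a right ACS ring, the annihilator of finitely many elements is essential
in a direct summand `eR` generated by an idempotent. -/
theorem acs_ann_of_finitely_many
    {R : Type*} [Ring R] (h : IsACSRing R) (n : ℕ) (x : Fin n → R) :
    ∃ e : R, IsIdempotentElem e ∧
      EssentialIn (⨅ i, annElem R (x i)) (idealGen R e) := by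
  induction n with
  | zero =>
    refine ⟨1, by simp [IsIdempotentElem], ?_, ?_⟩
    · intro t _
      exact mem_idealGen.mpr ⟨t, mul_one t⟩
    · intro K _ hK
      have : (⨅ i : Fin 0, annElem R (x i)) = ⊤ := by simp
      rw [this, top_inf_eq] at hK
      exact hK
  | succ n ih =>
    obtain ⟨e, he, hAle, hAess⟩ := ih (fun i => x i.castSucc)
    set A := ⨅ i : Fin n, annElem R (x i.castSucc) with hA
    set b := x (Fin.last n) with hb
    obtain ⟨g, hg, hBle, hBess⟩ := h (e * b)
    set B := annElem R (e * b) with hBdef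
    -- (1-e) ∈ B ≤ Rg, hence R(1-e) ≤ Rg
    have h1e : ∀ r : R, r * (1 - e) ∈ idealGen R g := by
      intro r
      apply hBle
      rw [mem_annElem]
      rw [mul_assoc, ← mul_assoc (1 - e) e b, sub_mul, one_mul, he.eq, sub_self,
        zero_mul, mul_zero]
    -- D := Rg ⊓ Re
    set D := idealGen R g ⊓ idealGen R e with hD
    -- D is a direct summand, with complement K0 := R(1-e) ⊔ R(1-g)
    set K0 := idealGen R (1 - e) ⊔ idealGen R (1 - g) with hK0
    have hcompl : IsCompl D K0 := by
      constructor
      · -- disjoint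
        rw [disjoint_iff]
        ext t
        simp only [Submodule.mem_inf, Submodule.mem_bot]
        constructor
        · rintro ⟨⟨htg, hte⟩, htK⟩
          obtain ⟨u, hu, v, hv, huv⟩ := Submodule.mem_sup.mp htK
          have hug : u ∈ idealGen R g := by
            obtain ⟨s, rfl⟩ := mem_idealGen.mp hu
            exact h1e s
          have hvg : v ∈ idealGen R g := by
            have : v = t - u := by rw [← huv, add_sub_cancel_left]
            rw [this]
            exact Submodule.sub_mem _ htg hug
          have hv0 : v = 0 := by
            have := idealGen_inf_one_sub hg ▸ (Submodule.mem_inf.mpr ⟨hvg, hv⟩)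
            simpa using this
          have hte' : t ∈ idealGen R (1 - e) := by
            rw [← huv, hv0, add_zero]; exact hu
          have := idealGen_inf_one_sub he ▸ (Submodule.mem_inf.mpr ⟨hte, hte'⟩)
          simpa using this
        · rintro rfl
          exact ⟨⟨Submodule.zero_mem _, Submodule.zero_mem _⟩, Submodule.zero_mem _⟩
      · -- codisjoint : D ⊔ K0 = ⊤
        rw [codisjoint_iff]
        rw [eq_top_iff]
        intro t _
        -- first: Rg ≤ D ⊔ R(1-e)
        have hRg : idealGen R g ≤ D ⊔ idealGen R (1 - e) := by
          intro s hs
          have hse : s * e ∈ D := by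
            constructor
            · have : s * e = s - s * (1 - e) := by noncomm_ring
              rw [this]
              exact Submodule.sub_mem _ hs (h1e s)
            · exact mem_idealGen.mpr ⟨s, rfl⟩
          have : s = s * e + s * (1 - e) := by noncomm_ring
          rw [this]
          exact Submodule.add_mem _ (Submodule.mem_sup_left hse)
            (Submodule.mem_sup_right (mem_idealGen.mpr ⟨s, rfl⟩))
        have h1 : t * g ∈ D ⊔ K0 := by
          have h' := hRg (mem_idealGen.mpr ⟨t, rfl⟩ : t * g ∈ idealGen R g)
          exact (sup_le_sup_left le_sup_left D) h'
        have h2 : t * (1 - g) ∈ D ⊔ K0 := by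
          apply Submodule.mem_sup_right
          exact Submodule.mem_sup_right (mem_idealGen.mpr ⟨t, rfl⟩)
        have : t = t * g + t * (1 - g) := by noncomm_ring
        rw [this]
        exact Submodule.add_mem _ h1 h2
    obtain ⟨d, hd, hdD⟩ := summand_is_idealGen hcompl
    refine ⟨d, hd, ?_, ?_⟩
    · -- T ≤ idealGen d = D
      rw [hdD]
      intro t ht
      rw [Submodule.mem_iInf] at ht
      have htA : t ∈ A := (Submodule.mem_iInf _).mpr fun i => ht i.castSucc
      have hte : t * e = t := (mem_idealGen_iff_mul he).mp (hAle htA)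
      have htb : t * b = 0 := mem_annElem.mp (ht (Fin.last n))
      have htB : t ∈ B := by
        rw [mem_annElem, ← mul_assoc, hte, htb]
      exact ⟨hBle htB, (mem_idealGen_iff_mul he).mpr hte⟩
    · -- essentiality
      rw [hdD]
      intro K hKD hTK
      have hKe : K ≤ idealGen R e := le_trans hKD inf_le_right
      have hKg : K ≤ idealGen R g := le_trans hKD inf_le_left
      -- B ⊓ (A ⊓ K) ≤ T ⊓ K
      have hsub : B ⊓ (A ⊓ K) ≤ (⨅ i, annElem R (x i)) ⊓ K := by
        rintro t ⟨htB, htA, htK⟩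
        refine ⟨(Submodule.mem_iInf _).mpr ?_, htK⟩
        intro i
        induction i using Fin.lastCases with
        | last =>
          rw [mem_annElem]
          have hte : t * e = t := (mem_idealGen_iff_mul he).mp (hAle htA)
          have : t * (e * b) = 0 := mem_annElem.mp htB
          rw [← mul_assoc, hte] at this
          exact this
        | cast i =>
          exact (Submodule.mem_iInf _).mp htA i
      have hBAK : B ⊓ (A ⊓ K) = ⊥ := by
        rw [← le_bot_iff]
        calc B ⊓ (A ⊓ K) ≤ (⨅ i, annElem R (x i)) ⊓ K := hsub
          _ = ⊥ := hTK
      have hAK : A ⊓ K = ⊥ := by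
        apply hBess (A ⊓ K) _ hBAK
        exact le_trans inf_le_right hKg
      exact hAess K hKe hAK

end CSRickartPaper
end
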